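/- arXiv:2212.14814 — 9 statements merged into one kernel-verified Lean document; each statement's English description precedes it below -/
import Mathlib

section
/- Let G be a simple graph and X a module of G (every vertex of X has the same neighborhood outside X). Then any induced path on four vertices P in G is either entirely contained in X, entirely contained in V \ X, or has exactly one vertex in X. -/
/-- `X` is a module of `G`: every vertex outside `X` is adjacent to all of `X` or none of `X`. -/
def IsModule {V : Type*} (G : SimpleGraph V) (X : Set V) : Prop :=
  ∀ x ∈ X, ∀ y ∈ X, ∀ v, v ∉ X → (G.Adj v x ↔ G.Adj v y)

/-- `a,b,c,d` form an induced path on four vertices in `G`. -/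
def IsInducedP4 {V : Type*} (G : SimpleGraph V) (a b c d : V) : Prop :=
  a ≠ b ∧ a ≠ c ∧ a ≠ d ∧ b ≠ c ∧ b ≠ d ∧ c ≠ d ∧
  G.Adj a b ∧ G.Adj b c ∧ G.Adj c d ∧ ¬ G.Adj a c ∧ ¬ G.Adj a d ∧ ¬ G.Adj b d

/-- A cograph is a graph with no induced `P₄`. -/
def IsCograph {V : Type*} (G : SimpleGraph V) : Prop :=
  ∀ a b c d, ¬ IsInducedP4 G a b c d

/-- The edit of `G` by a set `S` of (unordered) pairs: the adjacency is flipped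
exactly on the pairs of `S`. -/
def editGraph {V : Type*} (G : SimpleGraph V) (S : Set (Sym2 V)) : SimpleGraph V where
  Adj x y := x ≠ y ∧ ((G.Adj x y ∧ s(x,y) ∉ S) ∨ (¬ G.Adj x y ∧ s(x,y) ∈ S))
  symm := by
    constructor
    intro x y h
    refine ⟨h.1.symm, ?_⟩
    rw [Sym2.eq_swap]
    rcases h.2 with ⟨ha, hs⟩ | ⟨ha, hs⟩
    · exact Or.inl ⟨ha.symm, hs⟩
    · exact Or.inr ⟨fun hadj => ha hadj.symm, hs⟩
  loopless := ⟨fun x h => h.1 rfl⟩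

/-- `δ(X)`: the set of pairs with exactly one endpoint in `X`. -/
def cutPairs {V : Type*} (X : Set V) : Set (Sym2 V) :=
  {e | ∃ x y, e = s(x,y) ∧ x ∈ X ∧ y ∉ X}

/-- `X` is a `t`-module of `G`: editing at most `t` pairs of its cut makes it a module. -/
def IsTModule {V : Type*} (G : SimpleGraph V) (t : ℕ) (X : Set V) : Prop :=
  ∃ T ⊆ cutPairs X, T.ncard ≤ t ∧ IsModule (editGraph G T) X

/-- `M` is (the vertex set of) a connected component of `G`. -/
def IsCC {V : Type*} (G : SimpleGraph V) (M : Set V) : Prop :=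
  ∃ x, M = {y | G.Reachable x y}

/-- A comodule: a module which is a connected component of `G` or of its complement. -/
def IsComodule {V : Type*} (G : SimpleGraph V) (M : Set V) : Prop :=
  IsModule G M ∧ (IsCC G M ∨ IsCC Gᶜ M)

/-- A strong module: a module comparable with every module it meets. -/
def IsStrongModule {V : Type*} (G : SimpleGraph V) (M : Set V) : Prop :=
  IsModule G M ∧ ∀ M', IsModule G M' → (M ∩ M').Nonempty → M ⊆ M' ∨ M' ⊆ M

/-- an induced `P₄` is contained in a module `X`, avoids `X`,
or meets `X` in exactly one vertex. -/
theorem p4_module {V : Type*} (G : SimpleGraph V) (X : Set V) (hX : IsModule G X)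
    (a b c d : V) (h : IsInducedP4 G a b c d) :
    ({a, b, c, d} : Set V) ⊆ X ∨ ({a, b, c, d} : Set V) ∩ X = ∅ ∨
      ∃ v, ({a, b, c, d} : Set V) ∩ X = {v} := by
  obtain ⟨hab, hac, had, hbc, hbd, hcd, Eab, Ebc, Ecd, Nac, Nad, Nbd⟩ := h
  by_cases ha : a ∈ X <;> by_cases hb : b ∈ X <;> by_cases hc : c ∈ X <;> by_cases hd : d ∈ X
  -- all in
  · exact Or.inl (by intro x hx; simp only [Set.mem_insert_iff, Set.mem_singleton_iff] at hx
                     rcases hx with rfl|rfl|rfl|rfl <;> assumption)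
  -- a b c in, d out
  · exact absurd ((hX c hc a ha d hd).mp Ecd.symm).symm Nad
  -- a b d in, c out
  · exact absurd ((hX b hb a ha c hc).mp Ebc.symm).symm Nac
  -- a b in
  · exact absurd ((hX b hb a ha c hc).mp Ebc.symm).symm Nac
  -- a c d in, b out
  · exact absurd ((hX a ha d hd b hb).mp Eab.symm) Nbd
  -- a c in
  · exact absurd ((hX c hc a ha d hd).mp Ecd.symm).symm Nad
  -- a d in
  · exact absurd ((hX a ha d hd b hb).mp Eab.symm) Nbd
  -- a only
  · refine Or.inr (Or.inr ⟨a, ?_⟩)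
    ext x; simp only [Set.mem_inter_iff, Set.mem_insert_iff, Set.mem_singleton_iff]; aesop
  -- b c d in, a out
  · exact absurd ((hX b hb c hc a ha).mp Eab) Nac
  -- b c in
  · exact absurd ((hX b hb c hc a ha).mp Eab) Nac
  -- b d in
  · exact absurd ((hX b hb d hd a ha).mp Eab) Nad
  -- b only
  · refine Or.inr (Or.inr ⟨b, ?_⟩)
    ext x; simp only [Set.mem_inter_iff, Set.mem_insert_iff, Set.mem_singleton_iff]; aesop
  -- c d in
  · exact absurd ((hX c hc d hd b hb).mp Ebc) Nbd
  -- c only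
  · refine Or.inr (Or.inr ⟨c, ?_⟩)
    ext x; simp only [Set.mem_inter_iff, Set.mem_insert_iff, Set.mem_singleton_iff]; aesop
  -- d only
  · refine Or.inr (Or.inr ⟨d, ?_⟩)
    ext x; simp only [Set.mem_inter_iff, Set.mem_insert_iff, Set.mem_singleton_iff]; aesop
  -- none
  · refine Or.inr (Or.inl ?_)
    ext x; simp only [Set.mem_inter_iff, Set.mem_insert_iff, Set.mem_singleton_iff, Set.mem_empty_iff_false]; aesop
end

section
/- Let G be a graph, X a module of G, H a cograph obtained from G by editing a minimum-size set S of vertex pairs, and x ∈ X a vertex incident to the fewest pairs of S ∩ δ(X). Then the graph G' obtained by editing G with S' := (S \ δ(X)) ∪ {pairs making every vertex of X have the same outside-neighborhood as x} is a cograph with |S'| ≤ |S|, and X is a module of G'. -/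
lemma editGraph_adj {V : Type*} (G : SimpleGraph V) (S : Set (Sym2 V)) (u w : V) :
    (editGraph G S).Adj u w ↔
      u ≠ w ∧ ((G.Adj u w ∧ s(u,w) ∉ S) ∨ (¬ G.Adj u w ∧ s(u,w) ∈ S)) := Iff.rfl

/-- given a module `X` of `G`, a minimum cograph edit `S` of `G`, and a
vertex `x ∈ X` incident to the fewest pairs of `S ∩ δ(X)`, replacing the pairs of
`S ∩ δ(X)` by the pairs making every vertex of `X` have the same outside-neighborhood
as `x` (in the edited graph) yields a set `S'` with `|S'| ≤ |S|` whose edit is again a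
cograph, in which `X` is a module. -/
theorem module_preserving_min_edit {V : Type*} [Fintype V] (G : SimpleGraph V)
    (X : Set V) (hX : IsModule G X) (S : Set (Sym2 V))
    (hcog : IsCograph (editGraph G S))
    (hmin : ∀ S', IsCograph (editGraph G S') → S.ncard ≤ S'.ncard)
    (x : V) (hx : x ∈ X)
    (hleast : ∀ y ∈ X,
      ({e ∈ S ∩ cutPairs X | x ∈ e}).ncard ≤ ({e ∈ S ∩ cutPairs X | y ∈ e}).ncard) :
    IsCograph (editGraph G ((S \ cutPairs X) ∪
      {e | ∃ y v, e = s(y,v) ∧ y ∈ X ∧ v ∉ X ∧ ¬ (G.Adj y v ↔ (editGraph G S).Adj x v)})) ∧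
    ((S \ cutPairs X) ∪
      {e | ∃ y v, e = s(y,v) ∧ y ∈ X ∧ v ∉ X ∧
        ¬ (G.Adj y v ↔ (editGraph G S).Adj x v)}).ncard ≤ S.ncard ∧
    IsModule (editGraph G ((S \ cutPairs X) ∪
      {e | ∃ y v, e = s(y,v) ∧ y ∈ X ∧ v ∉ X ∧ ¬ (G.Adj y v ↔ (editGraph G S).Adj x v)})) X := by
  classical
  clear hmin
  set H := editGraph G S with hH
  set C := cutPairs X with hCdef
  set B : Set (Sym2 V) :=
    {e | ∃ y v, e = s(y,v) ∧ y ∈ X ∧ v ∉ X ∧ ¬ (G.Adj y v ↔ H.Adj x v)} with hBdef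
  set S' := (S \ C) ∪ B with hS'def
  -- basic membership lemmas
  have hmemC : ∀ e : Sym2 V, e ∈ C ↔ ∃ a b, e = s(a,b) ∧ a ∈ X ∧ b ∉ X := fun e => Iff.rfl
  have hBC : B ⊆ C := by
    rintro e ⟨y, v, rfl, hy, hv, -⟩
    exact ⟨y, v, rfl, hy, hv⟩
  have hnotC_in : ∀ u w : V, u ∈ X → w ∈ X → s(u,w) ∉ C := by
    rintro u w hu hw ⟨a, b, he, haX, hbX⟩
    rw [Sym2.eq_iff] at he
    rcases he with ⟨rfl, rfl⟩ | ⟨rfl, rfl⟩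
    · exact hbX hw
    · exact hbX hu
  have hnotC_out : ∀ u w : V, u ∉ X → w ∉ X → s(u,w) ∉ C := by
    rintro u w hu hw ⟨a, b, he, haX, hbX⟩
    rw [Sym2.eq_iff] at he
    rcases he with ⟨rfl, rfl⟩ | ⟨rfl, rfl⟩
    · exact hu haX
    · exact hw haX
  have hmemS' : ∀ e ∉ C, (e ∈ S' ↔ e ∈ S) := by
    intro e he
    constructor
    · rintro (h | h)
      · exact h.1
      · exact absurd (hBC h) he
    · intro h
      exact Or.inl ⟨h, he⟩
  -- G' agrees with H off the cut
  have adjSame : ∀ u w : V, s(u,w) ∉ C → ((editGraph G S').Adj u w ↔ H.Adj u w) := by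
    intro u w h
    rw [editGraph_adj, hH, editGraph_adj, hmemS' _ h]
  -- on the cut, every vertex of X gets the H-neighborhood of x
  have hmemB : ∀ y ∈ X, ∀ v, v ∉ X → (s(y,v) ∈ B ↔ ¬ (G.Adj y v ↔ H.Adj x v)) := by
    intro y hy v hv
    constructor
    · rintro ⟨y', v', he, hy', hv', hcond⟩
      rw [Sym2.eq_iff] at he
      rcases he with ⟨rfl, rfl⟩ | ⟨rfl, rfl⟩
      · exact hcond
      · exact absurd hy' hv
    · intro h
      exact ⟨y, v, rfl, hy, hv, h⟩
  have hmemS'cut : ∀ y ∈ X, ∀ v, v ∉ X →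
      (s(y,v) ∈ S' ↔ ¬ (G.Adj y v ↔ H.Adj x v)) := by
    intro y hy v hv
    constructor
    · rintro (h | h)
      · exact absurd ⟨y, v, rfl, hy, hv⟩ h.2
      · exact (hmemB y hy v hv).mp h
    · intro h
      exact Or.inr ((hmemB y hy v hv).mpr h)
  have adjCut : ∀ y ∈ X, ∀ v, v ∉ X → ((editGraph G S').Adj y v ↔ H.Adj x v) := by
    intro y hy v hv
    have hyv : y ≠ v := fun h => hv (h ▸ hy)
    rw [editGraph_adj, hmemS'cut y hy v hv]
    constructor
    · rintro ⟨-, ⟨ha, hn⟩ | ⟨ha, hn⟩⟩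
      · exact (not_not.mp hn).mp ha
      · by_contra hxv
        exact hn ⟨fun h => absurd h ha, fun h => absurd h hxv⟩
    · intro hxv
      refine ⟨hyv, ?_⟩
      by_cases ha : G.Adj y v
      · exact Or.inl ⟨ha, not_not.mpr ⟨fun _ => hxv, fun _ => ha⟩⟩
      · exact Or.inr ⟨ha, fun h => ha (h.mpr hxv)⟩
  -- module in G'
  have hmod' : IsModule (editGraph G S') X := by
    intro y hy z hz v hv
    have h1 := adjCut y hy v hv
    have h2 := adjCut z hz v hv
    exact ⟨fun h => (h2.mpr (h1.mp h.symm)).symm, fun h => (h1.mpr (h2.mp h.symm)).symm⟩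
  -- transfer of the module property of G across X
  have hmodG : ∀ y ∈ X, ∀ v, v ∉ X → (G.Adj y v ↔ G.Adj x v) := by
    intro y hy v hv
    rw [G.adj_comm y v, G.adj_comm x v]
    exact (hX x hx y hy v hv).symm
  have hkey : ∀ y ∈ X, ∀ v, v ∉ X → (¬ (G.Adj y v ↔ H.Adj x v) ↔ s(x,v) ∈ S) := by
    intro y hy v hv
    have hxv : x ≠ v := fun h => hv (h ▸ hx)
    rw [hmodG y hy v hv, hH, editGraph_adj]
    by_cases hs : s(x,v) ∈ S <;> by_cases ha : G.Adj x v <;> simp [hs, ha, hxv]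
  -- counting
  set K : Set V := {v | v ∉ X ∧ s(x,v) ∈ S} with hKdef
  have hBeq : B = (fun p : V × V => s(p.1, p.2)) '' (X ×ˢ K) := by
    ext e
    constructor
    · rintro ⟨y, v, rfl, hy, hv, hne⟩
      exact ⟨(y, v), ⟨hy, hv, (hkey y hy v hv).mp hne⟩, rfl⟩
    · rintro ⟨⟨y, v⟩, ⟨hy, hv, hs⟩, rfl⟩
      exact ⟨y, v, rfl, hy, hv, (hkey y hy v hv).mpr hs⟩
  have hBf : B.toFinset = Finset.image (fun p : V × V => s(p.1, p.2))
      (X.toFinset ×ˢ K.toFinset) := by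
    ext e
    simp only [Set.mem_toFinset, Finset.mem_image, Finset.mem_product, hBeq,
      Set.mem_image, Set.mem_prod]
  have hinjB : Set.InjOn (fun p : V × V => s(p.1, p.2))
      ↑(X.toFinset ×ˢ K.toFinset) := by
    rintro ⟨y, v⟩ hp ⟨y', v'⟩ hp' he
    simp only [Finset.coe_product, Set.mem_prod, Finset.mem_coe, Set.mem_toFinset,
      hKdef, Set.mem_setOf_eq] at hp hp'
    simp only [Sym2.eq_iff] at he
    rcases he with ⟨rfl, rfl⟩ | ⟨rfl, rfl⟩
    · rfl
    · exact absurd hp.1 hp'.2.1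
  have hBcard : B.toFinset.card = X.toFinset.card * K.toFinset.card := by
    rw [hBf, Finset.card_image_of_injOn hinjB, Finset.card_product]
  have hKim : ({e ∈ S ∩ C | x ∈ e} : Set (Sym2 V)).toFinset =
      Finset.image (fun v => s(x,v)) K.toFinset := by
    ext e
    simp only [Set.mem_toFinset, Set.mem_sep_iff, Set.mem_inter_iff, Finset.mem_image]
    constructor
    · rintro ⟨⟨heS, heC⟩, hxe⟩
      obtain ⟨a, b, rfl, haX, hbX⟩ := (hmemC _).mp heC
      rw [Sym2.mem_iff] at hxe
      rcases hxe with rfl | rfl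
      · exact ⟨b, ⟨hbX, heS⟩, rfl⟩
      · exact absurd hx hbX
    · rintro ⟨v, ⟨hv, hvs⟩, rfl⟩
      exact ⟨⟨hvs, ⟨x, v, rfl, hx, hv⟩⟩, Sym2.mem_mk_left x v⟩
  have hinjK : Set.InjOn (fun v => s(x,v)) ↑K.toFinset := by
    intro v hv v' hv' he
    simp only [Sym2.eq_iff] at he
    rcases he with ⟨-, h⟩ | ⟨h1, h2⟩
    · exact h
    · exact h2.trans h1
  have hKcard : ({e ∈ S ∩ C | x ∈ e} : Set (Sym2 V)).ncard = K.toFinset.card := by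
    rw [Set.ncard_eq_toFinset_card', hKim, Finset.card_image_of_injOn hinjK]
  -- decomposition of S ∩ C over the endpoints in X
  have hfilter : ∀ y : V, ((S ∩ C).toFinset.filter (fun e => y ∈ e)).card =
      ({e ∈ S ∩ C | y ∈ e} : Set (Sym2 V)).ncard := by
    intro y
    rw [Set.ncard_eq_toFinset_card']
    congr 1
    ext e
    simp [Set.mem_toFinset, Set.mem_sep_iff, and_comm]
  have hSb : (S ∩ C).toFinset =
      X.toFinset.biUnion (fun y => (S ∩ C).toFinset.filter (fun e => y ∈ e)) := by
    ext e
    simp only [Finset.mem_biUnion, Finset.mem_filter, Set.mem_toFinset, Set.mem_inter_iff]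
    constructor
    · rintro ⟨heS, heC⟩
      obtain ⟨a, b, rfl, haX, hbX⟩ := (hmemC _).mp heC
      exact ⟨a, haX, ⟨heS, heC⟩, Sym2.mem_mk_left a b⟩
    · rintro ⟨y, -, h, -⟩
      exact h
  have hdisj : ∀ y ∈ X.toFinset, ∀ z ∈ X.toFinset, y ≠ z →
      Disjoint ((S ∩ C).toFinset.filter (fun e => y ∈ e))
        ((S ∩ C).toFinset.filter (fun e => z ∈ e)) := by
    intro y hy z hz hyz
    rw [Set.mem_toFinset] at hy hz
    rw [Finset.disjoint_left]
    rintro e he he'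
    rw [Finset.mem_filter, Set.mem_toFinset] at he he'
    obtain ⟨⟨-, heC⟩, hye⟩ := he
    obtain ⟨-, hze⟩ := he'
    obtain ⟨a, b, rfl, haX, hbX⟩ := (hmemC _).mp heC
    rw [Sym2.mem_iff] at hye hze
    rcases hye with rfl | rfl
    · rcases hze with rfl | rfl
      · exact hyz rfl
      · exact hbX hz
    · exact hbX hy
  have hcount : B.ncard ≤ (S ∩ C).ncard := by
    rw [Set.ncard_eq_toFinset_card' B, Set.ncard_eq_toFinset_card' (S ∩ C), hBcard, hSb,
      Finset.card_biUnion hdisj]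
    calc X.toFinset.card * K.toFinset.card
        = ∑ _y ∈ X.toFinset, K.toFinset.card := by rw [Finset.sum_const, smul_eq_mul]
      _ ≤ ∑ y ∈ X.toFinset, ((S ∩ C).toFinset.filter (fun e => y ∈ e)).card := by
          refine Finset.sum_le_sum fun y hy => ?_
          rw [hfilter y, ← hKcard]
          exact hleast y (Set.mem_toFinset.mp hy)
  have hcard : S'.ncard ≤ S.ncard := by
    calc S'.ncard ≤ (S \ C).ncard + B.ncard := Set.ncard_union_le _ _
      _ ≤ (S \ C).ncard + (S ∩ C).ncard := Nat.add_le_add_left hcount _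
      _ = S.ncard := by
          rw [← Set.ncard_union_eq
            (Set.disjoint_left.mpr fun e he hin => he.2 hin.2),
            Set.diff_union_inter]
  -- cograph
  have hcog' : IsCograph (editGraph G S') := by
    rintro a b c d ⟨hab, hac, had, hbc, hbd, hcd, Aab, Abc, Acd, Nac, Nad, Nbd⟩
    have dis : ∀ p ∈ X, ∀ q ∈ X, ∀ w, w ∉ X → (editGraph G S').Adj p w →
        ¬ (editGraph G S').Adj q w → False := fun p hp q hq w hw h1 h2 =>
      h2 ((adjCut q hq w hw).mpr ((adjCut p hp w hw).mp h1))
    have adjIn : ∀ u ∈ X, ∀ w ∈ X, ((editGraph G S').Adj u w ↔ H.Adj u w) :=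
      fun u hu w hw => adjSame u w (hnotC_in u w hu hw)
    have adjOut : ∀ u, u ∉ X → ∀ w, w ∉ X → ((editGraph G S').Adj u w ↔ H.Adj u w) :=
      fun u hu w hw => adjSame u w (hnotC_out u w hu hw)
    by_cases ha : a ∈ X <;> by_cases hb : b ∈ X <;> by_cases hc : c ∈ X <;>
      by_cases hd : d ∈ X
    · -- all in X
      exact hcog a b c d ⟨hab, hac, had, hbc, hbd, hcd,
        (adjIn a ha b hb).mp Aab, (adjIn b hb c hc).mp Abc, (adjIn c hc d hd).mp Acd,
        fun h => Nac ((adjIn a ha c hc).mpr h), fun h => Nad ((adjIn a ha d hd).mpr h),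
        fun h => Nbd ((adjIn b hb d hd).mpr h)⟩
    · exact dis c hc a ha d hd Acd Nad
    · exact dis b hb a ha c hc Abc Nac
    · exact dis b hb a ha c hc Abc Nac
    · exact dis a ha d hd b hb Aab (fun h => Nbd h.symm)
    · exact dis c hc a ha d hd Acd Nad
    · exact dis a ha d hd b hb Aab (fun h => Nbd h.symm)
    · -- only a ∈ X
      exact hcog x b c d ⟨fun h => hb (h ▸ hx), fun h => hc (h ▸ hx), fun h => hd (h ▸ hx),
        hbc, hbd, hcd,
        (adjCut a ha b hb).mp Aab, (adjOut b hb c hc).mp Abc, (adjOut c hc d hd).mp Acd,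
        fun h => Nac ((adjCut a ha c hc).mpr h), fun h => Nad ((adjCut a ha d hd).mpr h),
        fun h => Nbd ((adjOut b hb d hd).mpr h)⟩
    · exact dis b hb c hc a ha Aab.symm (fun h => Nac h.symm)
    · exact dis b hb c hc a ha Aab.symm (fun h => Nac h.symm)
    · exact dis b hb d hd a ha Aab.symm (fun h => Nad h.symm)
    · -- only b ∈ X
      exact hcog a x c d ⟨fun h => ha (h.symm ▸ hx) , hac, had,
        fun h => hc (h.symm ▸ hx), fun h => hd (h.symm ▸ hx), hcd,
        ((adjCut b hb a ha).mp Aab.symm).symm, (adjCut b hb c hc).mp Abc,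
        (adjOut c hc d hd).mp Acd,
        fun h => Nac ((adjOut a ha c hc).mpr h), fun h => Nad ((adjOut a ha d hd).mpr h),
        fun h => Nbd ((adjCut b hb d hd).mpr h)⟩
    · exact dis c hc d hd b hb Abc.symm (fun h => Nbd h.symm)
    · -- only c ∈ X
      exact hcog a b x d ⟨hab, fun h => ha (h.symm ▸ hx), had,
        fun h => hb (h.symm ▸ hx), hbd, fun h => hd (h ▸ hx),
        (adjOut a ha b hb).mp Aab, ((adjCut c hc b hb).mp Abc.symm).symm,
        (adjCut c hc d hd).mp Acd,
        fun h => Nac (((adjCut c hc a ha).mpr h.symm).symm),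
        fun h => Nad ((adjOut a ha d hd).mpr h),
        fun h => Nbd ((adjOut b hb d hd).mpr h)⟩
    · -- only d ∈ X
      exact hcog a b c x ⟨hab, hac, fun h => ha (h.symm ▸ hx),
        hbc, fun h => hb (h.symm ▸ hx), fun h => hc (h.symm ▸ hx),
        (adjOut a ha b hb).mp Aab, (adjOut b hb c hc).mp Abc,
        ((adjCut d hd c hc).mp Acd.symm).symm,
        fun h => Nac ((adjOut a ha c hc).mpr h),
        fun h => Nad (((adjCut d hd a ha).mpr h.symm).symm),
        fun h => Nbd (((adjCut d hd b hb).mpr h.symm).symm)⟩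
    · -- none in X
      exact hcog a b c d ⟨hab, hac, had, hbc, hbd, hcd,
        (adjOut a ha b hb).mp Aab, (adjOut b hb c hc).mp Abc, (adjOut c hc d hd).mp Acd,
        fun h => Nac ((adjOut a ha c hc).mpr h), fun h => Nad ((adjOut a ha d hd).mpr h),
        fun h => Nbd ((adjOut b hb d hd).mpr h)⟩
  exact ⟨hcog', hcard, hmod'⟩
end

section
/- Let G be a graph admitting a cograph edit of size at most k, and let X be a t-module of G with |X| > k + t. Then every minimum-size cograph edit S of G satisfies |S ∩ δ(X)| ≤ t, i.e., the budget of X is at most t. -/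
-- auxiliary lemmas

lemma edit_adj {V : Type*} (G : SimpleGraph V) (S : Set (Sym2 V)) (x y : V) :
    (editGraph G S).Adj x y ↔
      x ≠ y ∧ ((G.Adj x y ∧ s(x,y) ∉ S) ∨ (¬ G.Adj x y ∧ s(x,y) ∈ S)) := Iff.rfl

lemma mem_cutPairs {V : Type*} (X : Set V) (x y : V) :
    s(x,y) ∈ cutPairs X ↔ ((x ∈ X ∧ y ∉ X) ∨ (y ∈ X ∧ x ∉ X)) := by
  constructor
  · rintro ⟨a, b, he, hA, hB⟩
    rw [Sym2.eq_iff] at he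
    rcases he with ⟨rfl, rfl⟩ | ⟨rfl, rfl⟩
    · exact Or.inl ⟨hA, hB⟩
    · exact Or.inr ⟨hA, hB⟩
  · rintro (⟨hx, hy⟩ | ⟨hy, hx⟩)
    · exact ⟨x, y, rfl, hx, hy⟩
    · exact ⟨y, x, Sym2.eq_swap, hy, hx⟩

lemma substCograph {V : Type*} (H : SimpleGraph V) (hH : IsCograph H)
    (X : Set V) (x0 : V) (hx0 : x0 ∈ X) (H' : SimpleGraph V)
    (hsame : ∀ u w, (u ∈ X ↔ w ∈ X) → (H'.Adj u w ↔ H.Adj u w))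
    (hmod : ∀ v, v ∉ X → ∀ y, y ∈ X → (H'.Adj v y ↔ H.Adj v x0)) :
    IsCograph H' := by
  intro a b c d hp
  obtain ⟨hab, hac, had, hbc, hbd, hcd, eab, ebc, ecd, nac, nad, nbd⟩ := hp
  have key : ∀ v, v ∉ X → ∀ y, y ∈ X → ∀ z, z ∈ X → (H'.Adj v y ↔ H'.Adj v z) :=
    fun v hv y hy z hz => (hmod v hv y hy).trans (hmod v hv z hz).symm
  by_cases ha : a ∈ X <;> by_cases hb : b ∈ X <;> by_cases hc : c ∈ X <;> by_cases hd : d ∈ X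
  · -- all in X
    exact hH a b c d ⟨hab, hac, had, hbc, hbd, hcd,
      (hsame a b (iff_of_true ha hb)).mp eab,
      (hsame b c (iff_of_true hb hc)).mp ebc,
      (hsame c d (iff_of_true hc hd)).mp ecd,
      fun h => nac ((hsame a c (iff_of_true ha hc)).mpr h),
      fun h => nad ((hsame a d (iff_of_true ha hd)).mpr h),
      fun h => nbd ((hsame b d (iff_of_true hb hd)).mpr h)⟩
  · -- a b c in, d out : d distinguishes (c,a)
    exact nad ((key d hd c hc a ha).mp ecd.symm).symm
  · -- a b d in, c out : c distinguishes (b,a)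
    exact nac ((key c hc b hb a ha).mp ebc.symm).symm
  · -- a b in, c d out : c distinguishes (b,a)
    exact nac ((key c hc b hb a ha).mp ebc.symm).symm
  · -- a c d in, b out : b distinguishes (a,d)
    exact nbd ((key b hb a ha d hd).mp eab.symm)
  · -- a c in, b d out : d distinguishes (c,a)
    exact nad ((key d hd c hc a ha).mp ecd.symm).symm
  · -- a d in, b c out : b distinguishes (a,d)
    exact nbd ((key b hb a ha d hd).mp eab.symm)
  · -- only a in : P4 (x0, b, c, d)
    refine hH x0 b c d ⟨?_, ?_, ?_, hbc, hbd, hcd, ?_, ?_, ?_, ?_, ?_, ?_⟩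
    · rintro rfl; exact hb hx0
    · rintro rfl; exact hc hx0
    · rintro rfl; exact hd hx0
    · exact ((hmod b hb a ha).mp eab.symm).symm
    · exact (hsame b c (iff_of_false hb hc)).mp ebc
    · exact (hsame c d (iff_of_false hc hd)).mp ecd
    · intro h; exact nac ((hmod c hc a ha).mpr h.symm).symm
    · intro h; exact nad ((hmod d hd a ha).mpr h.symm).symm
    · intro h; exact nbd ((hsame b d (iff_of_false hb hd)).mpr h)
  · -- b c d in, a out : a distinguishes (b,c)
    exact nac ((key a ha b hb c hc).mp eab)
  · -- b c in, a d out : a distinguishes (b,c)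
    exact nac ((key a ha b hb c hc).mp eab)
  · -- b d in, a c out : a distinguishes (b,d)
    exact nad ((key a ha b hb d hd).mp eab)
  · -- only b in : P4 (a, x0, c, d)
    refine hH a x0 c d ⟨?_, hac, had, ?_, ?_, hcd, ?_, ?_, ?_, ?_, ?_, ?_⟩
    · rintro rfl; exact ha hx0
    · rintro rfl; exact hc hx0
    · rintro rfl; exact hd hx0
    · exact (hmod a ha b hb).mp eab
    · exact ((hmod c hc b hb).mp ebc.symm).symm
    · exact (hsame c d (iff_of_false hc hd)).mp ecd
    · intro h; exact nac ((hsame a c (iff_of_false ha hc)).mpr h)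
    · intro h; exact nad ((hsame a d (iff_of_false ha hd)).mpr h)
    · intro h; exact nbd ((hmod d hd b hb).mpr h.symm).symm
  · -- c d in, a b out : b distinguishes (c,d)
    exact nbd ((key b hb c hc d hd).mp ebc)
  · -- only c in : P4 (a, b, x0, d)
    refine hH a b x0 d ⟨hab, ?_, had, ?_, hbd, ?_, ?_, ?_, ?_, ?_, ?_, ?_⟩
    · rintro rfl; exact ha hx0
    · rintro rfl; exact hb hx0
    · rintro rfl; exact hd hx0
    · exact (hsame a b (iff_of_false ha hb)).mp eab
    · exact (hmod b hb c hc).mp ebc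
    · exact ((hmod d hd c hc).mp ecd.symm).symm
    · intro h; exact nac ((hmod a ha c hc).mpr h)
    · intro h; exact nad ((hsame a d (iff_of_false ha hd)).mpr h)
    · intro h; exact nbd ((hsame b d (iff_of_false hb hd)).mpr h)
  · -- only d in : P4 (a, b, c, x0)
    refine hH a b c x0 ⟨hab, hac, ?_, hbc, ?_, ?_, ?_, ?_, ?_, ?_, ?_, ?_⟩
    · rintro rfl; exact ha hx0
    · rintro rfl; exact hb hx0
    · rintro rfl; exact hc hx0
    · exact (hsame a b (iff_of_false ha hb)).mp eab
    · exact (hsame b c (iff_of_false hb hc)).mp ebc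
    · exact (hmod c hc d hd).mp ecd
    · intro h; exact nac ((hsame a c (iff_of_false ha hc)).mpr h)
    · intro h; exact nad ((hmod a ha d hd).mpr h)
    · intro h; exact nbd ((hmod b hb d hd).mpr h)
  · -- all out
    exact hH a b c d ⟨hab, hac, had, hbc, hbd, hcd,
      (hsame a b (iff_of_false ha hb)).mp eab,
      (hsame b c (iff_of_false hb hc)).mp ebc,
      (hsame c d (iff_of_false hc hd)).mp ecd,
      fun h => nac ((hsame a c (iff_of_false ha hc)).mpr h),
      fun h => nad ((hsame a d (iff_of_false ha hd)).mpr h),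
      fun h => nbd ((hsame b d (iff_of_false hb hd)).mpr h)⟩

/-- if `G` admits a cograph edit of size at most `k` and `X` is a
`t`-module of `G` with `|X| > k + t`, then every minimum cograph edit `S` of `G`
satisfies `|S ∩ δ(X)| ≤ t` (the budget of `X` is at most `t`). -/
theorem tmodule_budget {V : Type*} [Fintype V] (G : SimpleGraph V) (k t : ℕ)
    (X : Set V)
    (hedit : ∃ S0 : Set (Sym2 V), IsCograph (editGraph G S0) ∧ S0.ncard ≤ k)
    (hX : IsTModule G t X) (hsize : k + t < X.ncard)
    (S : Set (Sym2 V)) (hS : IsCograph (editGraph G S))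
    (hmin : ∀ S', IsCograph (editGraph G S') → S.ncard ≤ S'.ncard) :
    (S ∩ cutPairs X).ncard ≤ t := by
  classical
  obtain ⟨S0, hS0c, hS0k⟩ := hedit
  obtain ⟨T, hTsub, hTt, hTmod⟩ := hX
  have hSk : S.ncard ≤ k := le_trans (hmin S0 hS0c) hS0k
  set H := editGraph G S with hHdef
  set P : Set (Sym2 V) := T ∪ (S ∩ cutPairs X) with hPdef
  have hPcut : P ⊆ cutPairs X := by
    rintro e (he | ⟨_, he⟩) <;> [exact hTsub he; exact he]
  have hPcard : P.ncard ≤ t + k := by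
    calc P.ncard ≤ T.ncard + (S ∩ cutPairs X).ncard := Set.ncard_union_le _ _
    _ ≤ t + k := by
        have h1 : (S ∩ cutPairs X).ncard ≤ S.ncard :=
          Set.ncard_le_ncard Set.inter_subset_left (Set.toFinite S)
        omega
  -- choose x0 ∈ X untouched by P
  have hx0ex : ∃ x0 ∈ X, ∀ e ∈ P, x0 ∉ e := by
    by_contra hcon
    push_neg at hcon
    have hne : Nonempty (Sym2 V) := by
      obtain ⟨x, hx⟩ : X.Nonempty := by
        rcases Set.eq_empty_or_nonempty X with h | h
        · rw [h, Set.ncard_empty] at hsize; omega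
        · exact h
      exact ⟨s(x, x)⟩
    have hch : ∀ x : V, ∃ e : Sym2 V, x ∈ X → (e ∈ P ∧ x ∈ e) := by
      intro x
      by_cases hx : x ∈ X
      · obtain ⟨e, he, hxe⟩ := hcon x hx
        exact ⟨e, fun _ => ⟨he, hxe⟩⟩
      · exact ⟨Classical.arbitrary _, fun h => absurd h hx⟩
    choose f hf using hch
    have hmaps : ∀ x ∈ X, f x ∈ P := fun x hx => (hf x hx).1
    have hinj : Set.InjOn f X := by
      intro x hx y hy hxy
      obtain ⟨u, w, heq, hu, hw⟩ := hPcut (hmaps x hx)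
      have hx1 : x ∈ f x := (hf x hx).2
      have hy1 : y ∈ f y := (hf y hy).2
      rw [← hxy] at hy1
      rw [heq, Sym2.mem_iff] at hx1 hy1
      rcases hx1 with rfl | rfl
      · rcases hy1 with rfl | rfl
        · rfl
        · exact absurd hy hw
      · exact absurd hx hw
    have := Set.ncard_le_ncard_of_injOn f hmaps hinj (Set.toFinite P)
    omega
  obtain ⟨x0, hx0X, hx0P⟩ := hx0ex
  have hx0S : ∀ v, v ∉ X → s(v, x0) ∉ S := by
    intro v hv hmem
    exact hx0P s(v, x0) (Or.inr ⟨hmem, (mem_cutPairs X v x0).mpr (Or.inr ⟨hx0X, hv⟩)⟩)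
      (Sym2.mem_iff.mpr (Or.inr rfl))
  have hx0T : ∀ v, s(v, x0) ∉ T := fun v hmem =>
    hx0P s(v, x0) (Or.inl hmem) (Sym2.mem_iff.mpr (Or.inr rfl))
  have hne_of : ∀ v, v ∉ X → v ≠ x0 := fun v hv h => hv (h ▸ hx0X)
  have hHx0 : ∀ v, v ∉ X → (H.Adj v x0 ↔ G.Adj v x0) := by
    intro v hv
    rw [hHdef, edit_adj]
    have := hx0S v hv
    have := hne_of v hv
    tauto
  have hGTx0 : ∀ v, v ∉ X → ((editGraph G T).Adj v x0 ↔ G.Adj v x0) := by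
    intro v hv
    rw [edit_adj]
    have := hx0T v
    have := hne_of v hv
    tauto
  -- the replacement cut edits
  set D : Set (Sym2 V) :=
    {e : Sym2 V | ∃ v y, e = s(v, y) ∧ v ∉ X ∧ y ∈ X ∧ ¬(G.Adj v y ↔ H.Adj v x0)}
    with hDdef
  have hDmem : ∀ v y, v ∉ X → y ∈ X → (s(v, y) ∈ D ↔ ¬(G.Adj v y ↔ H.Adj v x0)) := by
    intro v y hv hy
    constructor
    · rintro ⟨v', y', he, hv', hy', hne⟩
      rw [Sym2.eq_iff] at he
      rcases he with ⟨rfl, rfl⟩ | ⟨rfl, rfl⟩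
      · exact hne
      · exact absurd hy hv'
    · intro h; exact ⟨v, y, rfl, hv, hy, h⟩
  have hDT : D ⊆ T := by
    rintro e ⟨v, y, rfl, hv, hy, hne⟩
    have h1 : H.Adj v x0 ↔ G.Adj v x0 := hHx0 v hv
    have hm : (editGraph G T).Adj v x0 ↔ (editGraph G T).Adj v y :=
      hTmod x0 hx0X y hy v hv
    have h2 : (editGraph G T).Adj v x0 ↔ G.Adj v x0 := hGTx0 v hv
    have hvy : v ≠ y := fun h => hv (h ▸ hy)
    by_contra hmem
    have h3 : (editGraph G T).Adj v y ↔ G.Adj v y := by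
      rw [edit_adj]; tauto
    tauto
  have hDcut : D ⊆ cutPairs X := fun e he => hTsub (hDT he)
  set S' : Set (Sym2 V) := (S \ cutPairs X) ∪ D with hS'def
  have hS'mem_ncut : ∀ e, e ∉ cutPairs X → (e ∈ S' ↔ e ∈ S) := by
    intro e he
    constructor
    · rintro (⟨h1, _⟩ | h1)
      · exact h1
      · exact absurd (hDcut h1) he
    · intro h1; exact Or.inl ⟨h1, he⟩
  have hS'mem_cut : ∀ e, e ∈ cutPairs X → (e ∈ S' ↔ e ∈ D) := by
    intro e he
    constructor
    · rintro (⟨_, h1⟩ | h1)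
      · exact absurd he h1
      · exact h1
    · intro h1; exact Or.inr h1
  -- cograph-ness of the new edit
  have hcog' : IsCograph (editGraph G S') := by
    apply substCograph H hS X x0 hx0X
    · intro u w huw
      have hnc : s(u, w) ∉ cutPairs X := by
        rw [mem_cutPairs]; tauto
      have hmm := hS'mem_ncut _ hnc
      rw [edit_adj, edit_adj, ← hHdef] at *
      tauto
    · intro v hv y hy
      have hc : s(v, y) ∈ cutPairs X := (mem_cutPairs X v y).mpr (Or.inr ⟨hy, hv⟩)
      have hmm : s(v, y) ∈ S' ↔ ¬(G.Adj v y ↔ H.Adj v x0) :=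
        (hS'mem_cut _ hc).trans (hDmem v y hv hy)
      have hvy : v ≠ y := fun h => hv (h ▸ hy)
      rw [edit_adj]
      tauto
  -- size count
  have hDt : D.ncard ≤ t := le_trans (Set.ncard_le_ncard hDT (Set.toFinite T)) hTt
  have hS'card : S'.ncard ≤ (S \ cutPairs X).ncard + t :=
    le_trans (Set.ncard_union_le _ _) (by omega)
  have hsplit : (S ∩ cutPairs X).ncard + (S \ cutPairs X).ncard = S.ncard :=
    Set.ncard_inter_add_ncard_diff_eq_ncard S (cutPairs X) (Set.toFinite S)
  have hfinal := hmin S' hcog'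
  omega
end

section
/- Let T be a rooted tree that is a path and let P₁,…,P_k be descending subpaths of T whose edge sets cover all edges of T. If T has at least 4ck edges (for some constant c ≥ 1), then there exists an index i and a subpath Q of P_i with at least one edge such that Q shares at least one edge with at most |E(Q)|/c of the paths P₁,…,P_k. -/
/-- `a` is the parent of `b` in the rooted forest given by the parent map `par`. -/
def parentRel {V : Type*} (par : V → Option V) (a b : V) : Prop := par b = some a

/-- `a` is an ancestor of `b` (reflexively). -/
def Anc {V : Type*} (par : V → Option V) (a b : V) : Prop :=
  Relation.ReflTransGen (parentRel par) a b

/-- The parent map has no cycles, so it defines a rooted forest. -/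
def ParAcyclic {V : Type*} (par : V → Option V) : Prop :=
  ∀ v, ¬ Relation.TransGen (parentRel par) v v

/-- The edges of the forest, each edge being identified with its lower (child) endpoint. -/
def forestEdges {V : Type*} (par : V → Option V) : Set V := {v | par v ≠ none}

/-- A descending path, recorded as a pair (top endpoint, bottom endpoint). -/
def IsDescPath {V : Type*} (par : V → Option V) (P : V × V) : Prop := Anc par P.1 P.2

/-- The edge set of a descending path `P = (top, bot)`: the edges (identified with their
child endpoints) lying strictly below `top` and weakly above `bot`. -/
def dpEdges {V : Type*} (par : V → Option V) (P : V × V) : Set V :=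
  {v | Anc par P.1 v ∧ v ≠ P.1 ∧ Anc par v P.2}

/-- `Q` is a (descending) subpath of the descending path `P`. -/
def IsSubpath {V : Type*} (par : V → Option V) (P Q : V × V) : Prop :=
  Anc par P.1 Q.1 ∧ Anc par Q.1 Q.2 ∧ Anc par Q.2 P.2

section Aux

open Finset in
lemma keyNat (k n : ℕ) (hk : 1 ≤ k) (a b : Fin k → ℕ) (hab : ∀ j, a j ≤ b j)
    (hbn : ∀ j, b j ≤ n)
    (hcov : ∀ e, 0 < e → e ≤ n → ∃ j, a j < e ∧ e ≤ b j)
    (c : ℝ) (hc : 1 ≤ c) (hn : 4 * c * k ≤ (n : ℝ)) :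
    ∃ i y x, a i ≤ y ∧ y < x ∧ x ≤ b i ∧
      (((Finset.univ.filter (fun j => a j < x ∧ y < b j)).card : ℝ) ≤ ((x : ℝ) - y) / c) := by
  classical
  by_contra hfail
  push_neg at hfail
  have hc0 : (0:ℝ) < c := lt_of_lt_of_le one_pos hc
  set A : ℕ → ℕ := fun p => (univ.filter (fun j => a j < p)).card with hA
  set A' : ℕ → ℕ := fun p => (univ.filter (fun j => a j ≤ p)).card with hA'
  set B : ℕ → ℕ := fun p => (univ.filter (fun j => b j ≤ p)).card with hB
  set N : ℕ → ℕ := fun q => (univ.filter (fun j => a j ≤ q)).sup b with hNdef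
  have hAk : ∀ p, A p ≤ k := fun p => by
    simpa using (Finset.card_filter_le univ (fun j => a j < p))
  have hA'k : ∀ p, A' p ≤ k := fun p => by
    simpa using (Finset.card_filter_le univ (fun j => a j ≤ p))
  have hN2 : ∀ q j, a j ≤ q → b j ≤ N q := by
    intro q j h
    exact Finset.le_sup (f := b) (Finset.mem_filter.2 ⟨Finset.mem_univ j, h⟩)
  have hNn : ∀ q, N q ≤ n := by
    intro q
    exact Finset.sup_le fun j _ => hbn j
  have hN1 : ∀ q, q < n → q < N q := by
    intro q hq
    obtain ⟨j, hj1, hj2⟩ := hcov (q+1) (Nat.succ_pos q) hq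
    exact lt_of_lt_of_le hj2 (hN2 q j (Nat.lt_succ_iff.mp hj1))
  have hwin : ∀ q, q < n → ((N q : ℝ) - q) / c < (A (N q) : ℝ) - B q := by
    intro q hq
    have hne : (univ.filter (fun j => a j ≤ q)).Nonempty := by
      obtain ⟨j, hj1, _⟩ := hcov (q+1) (Nat.succ_pos q) hq
      exact ⟨j, Finset.mem_filter.2 ⟨Finset.mem_univ j, Nat.lt_succ_iff.mp hj1⟩⟩
    obtain ⟨j, hjmem, hjeq⟩ := Finset.exists_mem_eq_sup _ hne b
    have hja : a j ≤ q := (Finset.mem_filter.1 hjmem).2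
    have hmain := hfail j q (N q) hja (hN1 q hq) (le_of_eq hjeq)
    have hsub : (univ.filter (fun j => b j ≤ q)) ⊆ (univ.filter (fun j => a j < N q)) := by
      intro j' hj'
      have := (Finset.mem_filter.1 hj').2
      exact Finset.mem_filter.2 ⟨Finset.mem_univ j',
        lt_of_le_of_lt (le_trans (hab j') this) (hN1 q hq)⟩
    have hset : (univ.filter (fun j => a j < N q ∧ q < b j))
        = (univ.filter (fun j => a j < N q)) \ (univ.filter (fun j => b j ≤ q)) := by
      ext j'
      simp only [Finset.mem_filter, Finset.mem_sdiff, Finset.mem_univ, true_and]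
      omega
    have hcard : (univ.filter (fun j => a j < N q ∧ q < b j)).card = A (N q) - B q := by
      rw [hset, Finset.card_sdiff_of_subset hsub]
    rw [hcard] at hmain
    have hle : B q ≤ A (N q) := Finset.card_le_card hsub
    calc ((N q : ℝ) - q) / c < ((A (N q) - B q : ℕ) : ℝ) := hmain
      _ = (A (N q) : ℝ) - B q := by rw [Nat.cast_sub hle]
  set Inv : ℕ → ℕ → Prop := fun p q =>
    ((q : ℝ) / c ≤ (A q : ℝ) + (A' p : ℝ)) ∧ (∀ j, a j ≤ p → b j ≤ q) ∧ q ≤ n with hInv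
  have hn1 : 1 ≤ n := by
    by_contra h
    push_neg at h
    interval_cases n
    have : (4:ℝ) ≤ 0 := by
      calc (4:ℝ) = 4 * 1 * 1 := by ring
        _ ≤ 4 * c * k := by
            have : (1:ℝ) ≤ (k:ℝ) := by exact_mod_cast hk
            nlinarith
        _ ≤ 0 := by exact_mod_cast hn
    linarith
  have hbase : Inv 0 (N 0) := by
    refine ⟨?_, fun j hj => hN2 0 j hj, hNn 0⟩
    have hw := hwin 0 (lt_of_lt_of_le Nat.zero_lt_one hn1)
    have hB0 : (0:ℝ) ≤ (B 0 : ℝ) := Nat.cast_nonneg _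
    have hA'0 : (0:ℝ) ≤ (A' 0 : ℝ) := Nat.cast_nonneg _
    push_cast at hw ⊢
    rw [sub_zero] at hw
    linarith
  have hstep : ∀ p q, Inv p q → q < n → Inv q (N q) := by
    intro p q ⟨h1, h2, _⟩ hq
    refine ⟨?_, fun j hj => hN2 q j hj, hNn q⟩
    have hw := hwin q hq
    have hA'B : (A' p : ℝ) ≤ (B q : ℝ) := by
      have : (univ.filter (fun j => a j ≤ p)) ⊆ (univ.filter (fun j => b j ≤ q)) := by
        intro j hj
        exact Finset.mem_filter.2 ⟨Finset.mem_univ j, h2 j (Finset.mem_filter.1 hj).2⟩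
      exact_mod_cast Finset.card_le_card this
    have hAA' : (A q : ℝ) ≤ (A' q : ℝ) := by
      have : (univ.filter (fun j => a j < q)) ⊆ (univ.filter (fun j => a j ≤ q)) := by
        intro j hj
        exact Finset.mem_filter.2 ⟨Finset.mem_univ j, le_of_lt (Finset.mem_filter.1 hj).2⟩
      exact_mod_cast Finset.card_le_card this
    have key : ((N q : ℝ)) / c = (q:ℝ)/c + ((N q : ℝ) - q)/c := by ring
    rw [key]
    linarith
  have hreach : ∀ m p q, Inv p q → n - q ≤ m → ∃ p', Inv p' n := by
    intro m
    induction m with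
    | zero =>
      intro p q hI hm
      have : q = n := le_antisymm hI.2.2 (by omega)
      exact ⟨p, this ▸ hI⟩
    | succ m ih =>
      intro p q hI hm
      rcases eq_or_lt_of_le hI.2.2 with heq | hlt
      · exact ⟨p, heq ▸ hI⟩
      · have := hN1 q hlt
        exact ih q (N q) (hstep p q hI hlt) (by omega)
  obtain ⟨p, hIn⟩ := hreach (n - N 0) 0 (N 0) hbase le_rfl
  have hfin : (n:ℝ)/c ≤ 2 * k := by
    linarith [hIn.1, (by exact_mod_cast hAk n : (A n : ℝ) ≤ k),
      (by exact_mod_cast hA'k p : (A' p : ℝ) ≤ k)]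
  have hk1 : (1:ℝ) ≤ (k:ℝ) := by exact_mod_cast hk
  rw [div_le_iff₀ hc0] at hfin
  nlinarith

end Aux

/-- if a rooted tree which is a path is edge-covered by `k` descending
paths `P₁,…,P_k` and has at least `4ck` edges (`c ≥ 1`), then some `Pᵢ` contains a
`c`-sparse subpath `Q`: a subpath with at least one edge meeting at most `|E(Q)|/c`
of the paths on an edge. -/
theorem sparse_path_in_path {V : Type*} [Fintype V] (par : V → Option V)
    (hacyc : ParAcyclic par) (r : V) (hroot : ∀ v, Anc par r v)
    (hpath : ∀ a b c, par b = some a → par c = some a → b = c)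
    (k : ℕ) (hk : 1 ≤ k) (P : Fin k → V × V) (hP : ∀ i, IsDescPath par (P i))
    (hcover : ∀ v ∈ forestEdges par, ∃ i, v ∈ dpEdges par (P i))
    (c : ℝ) (hc : 1 ≤ c)
    (hsize : 4 * c * k ≤ ((forestEdges par).ncard : ℝ)) :
    ∃ i, ∃ Q : V × V, IsSubpath par (P i) Q ∧ Q.1 ≠ Q.2 ∧
      (({j | (dpEdges par Q ∩ dpEdges par (P j)).Nonempty}).ncard : ℝ)
        ≤ ((dpEdges par Q).ncard : ℝ) / c := by
    classical
  have htg : ∀ a b : V, Anc par a b → a ≠ b → Relation.TransGen (parentRel par) a b := by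
    intro a b h hne
    rcases Relation.ReflTransGen.cases_head h with heq | ⟨z, h1, h2⟩
    · exact absurd heq hne
    · exact Relation.TransGen.head' h1 h2
  have hanti : ∀ a b : V, Anc par a b → Anc par b a → a = b := by
    intro a b hab hba
    by_contra hne
    exact hacyc a ((htg a b hab hne).trans_left hba)
  have htot : ∀ a b : V, Anc par a b ∨ Anc par b a := fun a b =>
    Relation.ReflTransGen.total_of_right_unique
      (fun x y z h1 h2 => hpath x y z h1 h2) (hroot a) (hroot b)
  set S : V → Set V := fun v => {w | Anc par w v ∧ w ≠ v} with hSdef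
  set d : V → ℕ := fun v => (S v).ncard with hddef
  have hmono : ∀ u v : V, Anc par u v → u ≠ v → d u < d v := by
    intro u v h hne
    have hsub : S u ⊆ S v := by
      rintro w ⟨h1, h2⟩
      refine ⟨h1.trans h, fun hwv => ?_⟩
      subst hwv
      exact hne (hanti u w h h1)
    have hmem : u ∈ S v := ⟨h, hne⟩
    have hnmem : u ∉ S u := fun h' => h'.2 rfl
    exact Set.ncard_lt_ncard ⟨hsub, fun hc' => hnmem (hc' hmem)⟩ (Set.toFinite _)
  have hdle : ∀ u v : V, Anc par u v ↔ d u ≤ d v := by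
    intro u v
    constructor
    · intro h
      rcases eq_or_ne u v with rfl | hne
      · exact le_rfl
      · exact (hmono u v h hne).le
    · intro h
      by_contra hnA
      rcases htot u v with h' | h'
      · exact hnA h'
      · have hne : v ≠ u := by rintro rfl; exact hnA h'
        exact absurd h (not_le.2 (hmono v u h' hne))
  have hinj : Function.Injective d := by
    intro u v h
    by_contra hne
    rcases htot u v with h' | h'
    · exact absurd h (hmono u v h' hne).ne
    · exact absurd h.symm (hmono v u h' (Ne.symm hne)).ne
  have hparentAnc : ∀ v w : V, par v = some w → Anc par w v :=
    fun v w h => Relation.ReflTransGen.single h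
  have hparr : par r = none := by
    rcases hpr : par r with _ | w
    · rfl
    · exfalso
      have hAnc : Anc par w r := hparentAnc r w hpr
      rcases eq_or_ne r w with rfl | hne
      · exact hacyc r (Relation.TransGen.single hpr)
      · exact hacyc r ((htg r w (hroot w) hne).tail hpr)
  have hpane : ∀ v : V, v ≠ r → par v ≠ none := by
    intro v hne hnone
    rcases Relation.ReflTransGen.cases_tail (hroot v) with heq | ⟨z, _, hz2⟩
    · exact hne heq
    · rw [show (parentRel par z v) = (par v = some z) from rfl, hnone] at hz2
      cases hz2
  have hFE : forestEdges par = {v : V | v ≠ r} := by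
    ext v
    simp only [forestEdges, Set.mem_setOf_eq]
    constructor
    · intro h heq
      subst heq
      exact h hparr
    · exact hpane v
  have hdr : d r = 0 := by
    have : S r = ∅ := by
      ext w
      simp only [hSdef, Set.mem_setOf_eq, Set.mem_empty_iff_false, iff_false, not_and]
      intro h1 h2
      exact h2 (hanti w r h1 (hroot w))
    rw [hddef]
    simp only [this, Set.ncard_empty]
  have hdlt : ∀ v : V, d v < Fintype.card V := by
    intro v
    have hss : S v ⊂ Set.univ := by
      refine ⟨Set.subset_univ _, fun hc' => ?_⟩
      have : v ∈ S v := hc' (Set.mem_univ v)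
      exact this.2 rfl
    have := Set.ncard_lt_ncard hss (Set.toFinite _)
    rwa [Set.ncard_univ, Nat.card_eq_fintype_card] at this
  have hcard1 : 1 ≤ Fintype.card V := Fintype.card_pos_iff.2 ⟨r⟩
  set n : ℕ := Fintype.card V - 1 with hndef
  have hdn : ∀ v : V, d v ≤ n := fun v => by have := hdlt v; omega
  have hsurj : ∀ m : ℕ, m < Fintype.card V → ∃ v, d v = m := by
    have hbij : Function.Bijective (fun v => (⟨d v, hdlt v⟩ : Fin (Fintype.card V))) := by
      rw [Fintype.bijective_iff_injective_and_card]
      exact ⟨fun u v h => hinj (congrArg Fin.val h), by simp⟩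
    intro m hm
    obtain ⟨v, hv⟩ := hbij.2 ⟨m, hm⟩
    exact ⟨v, congrArg Fin.val hv⟩
  have hFEcard : (forestEdges par).ncard = n := by
    rw [hFE]
    have h1 : ({v : V | v ≠ r}) = ({r} : Set V)ᶜ := by
      ext v; simp [Set.mem_compl_iff]
    rw [h1]
    have h2 := Set.ncard_add_ncard_compl ({r} : Set V) (Set.toFinite _) (Set.toFinite _)
    rw [Set.ncard_singleton] at h2
    rw [Nat.card_eq_fintype_card] at h2
    omega
  -- apply the numeric lemma
  obtain ⟨i, y, x, h1, h2, h3, h4⟩ :=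
    keyNat k n hk (fun j => d (P j).1) (fun j => d (P j).2)
      (fun j => (hdle _ _).1 (hP j)) (fun j => hdn _)
      (by
        intro e he0 hen
        obtain ⟨v, hv⟩ := hsurj e (by omega)
        have hvr : v ≠ r := by
          rintro rfl
          rw [hdr] at hv
          omega
        obtain ⟨j, hj⟩ := hcover v (by rw [hFE]; exact hvr)
        obtain ⟨hb1, hb2, hb3⟩ := hj
        refine ⟨j, ?_, ?_⟩
        · rw [← hv]; exact hmono _ _ hb1 (Ne.symm hb2)
        · rw [← hv]; exact (hdle _ _).1 hb3)
      c hc (by rw [hFEcard] at hsize; exact_mod_cast hsize)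
  have hxn : x ≤ n := le_trans h3 (hdn _)
  obtain ⟨u, hu⟩ := hsurj y (by omega)
  obtain ⟨w, hw⟩ := hsurj x (by omega)
  have hQ : dpEdges par (u, w) = {z : V | y < d z ∧ d z ≤ x} := by
    ext z
    simp only [dpEdges, Set.mem_setOf_eq]
    constructor
    · rintro ⟨ha1, ha2, ha3⟩
      refine ⟨?_, ?_⟩
      · rw [← hu]; exact hmono _ _ ha1 (Ne.symm ha2)
      · rw [← hw]; exact (hdle _ _).1 ha3
    · rintro ⟨hz1, hz2⟩
      refine ⟨(hdle _ _).2 (by omega), fun hzu => ?_, (hdle _ _).2 (by omega)⟩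
      subst hzu
      omega
  have himg : d '' (dpEdges par (u, w)) = Set.Ioc y x := by
    rw [hQ]
    ext m
    simp only [Set.mem_image, Set.mem_setOf_eq, Set.mem_Ioc]
    constructor
    · rintro ⟨z, ⟨hz1, hz2⟩, rfl⟩
      exact ⟨hz1, hz2⟩
    · rintro ⟨hm1, hm2⟩
      obtain ⟨z, hz⟩ := hsurj m (by omega)
      exact ⟨z, ⟨by omega, by omega⟩, hz⟩
  have hQcard : (dpEdges par (u, w)).ncard = x - y := by
    have himg2 := Set.ncard_image_of_injective (dpEdges par (u, w)) hinj
    rw [himg] at himg2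
    rw [← himg2, ← Finset.coe_Ioc, Set.ncard_coe_finset, Nat.card_Ioc]
  have hsubM : {j | (dpEdges par (u, w) ∩ dpEdges par (P j)).Nonempty} ⊆
      ↑(Finset.univ.filter (fun j => d (P j).1 < x ∧ y < d (P j).2)) := by
    rintro j ⟨z, hz1, hz2⟩
    have hz1' : y < d z ∧ d z ≤ x := by rw [hQ] at hz1; exact hz1
    obtain ⟨hb1, hb2, hb3⟩ := hz2
    have hlo := hmono _ _ hb1 (Ne.symm hb2)
    have hhi := (hdle _ _).1 hb3
    simp only [Finset.coe_filter, Set.mem_setOf_eq, Finset.mem_univ, true_and]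
    exact ⟨by omega, by omega⟩
  have hMle : ({j | (dpEdges par (u, w) ∩ dpEdges par (P j)).Nonempty}).ncard ≤
      (Finset.univ.filter (fun j => d (P j).1 < x ∧ y < d (P j).2)).card := by
    have h := Set.ncard_le_ncard hsubM (Set.toFinite _)
    rwa [Set.ncard_coe_finset] at h
  refine ⟨i, (u, w), ⟨?_, ?_, ?_⟩, ?_, ?_⟩
  · exact (hdle _ _).2 (by rw [hu]; exact h1)
  · exact (hdle _ _).2 (by rw [hu, hw]; omega)
  · exact (hdle _ _).2 (by rw [hw]; exact h3)
  · intro heq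
    simp only at heq
    rw [heq] at hu
    omega
  · calc (({j | (dpEdges par (u, w) ∩ dpEdges par (P j)).Nonempty}).ncard : ℝ)
        ≤ ((Finset.univ.filter (fun j => d (P j).1 < x ∧ y < d (P j).2)).card : ℝ) := by
          exact_mod_cast hMle
      _ ≤ ((x : ℝ) - y) / c := h4
      _ = ((dpEdges par (u, w)).ncard : ℝ) / c := by
          rw [hQcard, Nat.cast_sub (le_of_lt h2)]
end

section
/- Let T be a rooted forest and P₁,…,P_k descending paths whose edge sets cover all edges of T. If |E(T)| ≥ 4ck(1 + log₂ k) for some constant c ≥ 1, then there exists a c-sparse descending path: a subpath Q (with at least one edge) of some P_i that shares at least one edge with at most |E(Q)|/c of the paths P₁,…,P_k. -/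
set_option linter.unusedSectionVars false
noncomputable section SFP
open Finset Classical

namespace SFP

variable {V : Type*} [Fintype V]

/-- one upward step, on `Option V`. -/
def ostep (par : V → Option V) (o : Option V) : Option V := o.bind par

/-- `n`-fold parent of `v`. -/
def upi (par : V → Option V) (n : ℕ) (v : V) : Option V := (ostep par)^[n] (some v)

variable {par : V → Option V}

lemma ostep_none : ostep par none = none := rfl

lemma ostep_iter_none (n : ℕ) : (ostep par)^[n] (none : Option V) = none := by
  induction n with
  | zero => rfl
  | succ n ih => rw [Function.iterate_succ_apply, ostep_none, ih]

@[simp] lemma upi_zero (v : V) : upi par 0 v = some v := rfl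

lemma upi_one (v : V) : upi par 1 v = par v := rfl

lemma upi_succ (n : ℕ) (v : V) : upi par (n+1) v = (ostep par)^[n] (par v) := by
  rw [upi, Function.iterate_succ_apply]; rfl

lemma upi_succ_some {v u : V} (h : par v = some u) (n : ℕ) :
    upi par (n+1) v = upi par n u := by rw [upi_succ, h]; rfl

lemma upi_succ_none {v : V} (h : par v = none) (n : ℕ) :
    upi par (n+1) v = none := by rw [upi_succ, h, ostep_iter_none]

lemma upi_add (m n : ℕ) (v : V) :
    upi par (m + n) v = (ostep par)^[m] (upi par n v) := by
  rw [upi, Function.iterate_add_apply]; rfl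

lemma upi_add_some {v a : V} {n : ℕ} (h : upi par n v = some a) (m : ℕ) :
    upi par (m + n) v = upi par m a := by
  rw [upi_add, h]; rfl

lemma upi_none_mono {v : V} {m n : ℕ} (hmn : m ≤ n) (h : upi par m v = none) :
    upi par n v = none := by
  obtain ⟨d, rfl⟩ := Nat.exists_eq_add_of_le hmn
  rw [Nat.add_comm, upi_add, h, ostep_iter_none]

lemma upi_isSome_mono {v : V} {m n : ℕ} (hmn : m ≤ n) (h : (upi par n v).isSome) :
    (upi par m v).isSome := by
  rcases ho : upi par m v with _ | u
  · rw [upi_none_mono hmn ho] at h; simp at h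
  · rfl

lemma transGen_of_upi :
    ∀ (n : ℕ) (v a : V), upi par (n+1) v = some a → Relation.TransGen (parentRel par) a v := by
  intro n
  induction n with
  | zero => intro v a h; rw [upi_one] at h; exact Relation.TransGen.single h
  | succ n ih =>
    intro v a h
    cases hpv : par v with
    | none => rw [upi_succ_none hpv] at h; cases h
    | some u =>
      have h' : upi par (n+1) u = some a := by rw [← upi_succ_some hpv]; exact h
      exact (ih u a h').tail hpv

variable (hacyc : ParAcyclic par)
include hacyc

lemma upi_self_eq_zero {n : ℕ} {v : V} (h : upi par n v = some v) : n = 0 := by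
  cases n with
  | zero => rfl
  | succ n => exact absurd (transGen_of_upi n v v h) (hacyc v)

lemma upi_inj {m n : ℕ} {v a : V}
    (hm : upi par m v = some a) (hn : upi par n v = some a) : m = n := by
  rcases le_total m n with h | h
  · obtain ⟨d, rfl⟩ := Nat.exists_eq_add_of_le h
    have hd : upi par d a = some a := by
      rw [← upi_add_some hm d, Nat.add_comm]; exact hn
    rw [upi_self_eq_zero hacyc hd, Nat.add_zero]
  · obtain ⟨d, rfl⟩ := Nat.exists_eq_add_of_le h
    have hd : upi par d a = some a := by
      rw [← upi_add_some hn d, Nat.add_comm]; exact hm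
    rw [upi_self_eq_zero hacyc hd, Nat.add_zero]

lemma exists_upi_none (v : V) : ∃ n, upi par n v = none := by
  by_contra h
  push_neg at h
  have hs : ∀ n, (upi par n v).isSome := by
    intro n; rcases ho : upi par n v with _ | u
    · exact absurd ho (h n)
    · rfl
  obtain ⟨m, n, hmn, he⟩ :=
    Finite.exists_ne_map_eq_of_infinite (fun n => (upi par n v).get (hs n))
  apply hmn
  have h1 : upi par m v = some ((upi par n v).get (hs n)) := by
    rw [← he]; exact (Option.some_get (hs m)).symm
  exact upi_inj hacyc h1 (Option.some_get (hs n)).symm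

/-- depth of `v`: number of strict ancestors. -/
def dep (par : V → Option V) (v : V) : ℕ :=
  if h : ∃ n, upi par n v = none then Nat.find h - 1 else 0

lemma upi_dep_succ_none (v : V) : upi par (dep par v + 1) v = none := by
  have h := exists_upi_none hacyc v
  have h1 : 1 ≤ Nat.find h := by
    rcases Nat.eq_zero_or_pos (Nat.find h) with h0 | h0
    · exfalso; have := Nat.find_spec h; rw [h0] at this; simp at this
    · exact h0
  rw [dep, dif_pos h, Nat.sub_add_cancel h1]
  exact Nat.find_spec h

lemma upi_dep_isSome (v : V) : (upi par (dep par v) v).isSome := by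
  have h := exists_upi_none hacyc v
  have h1 : 1 ≤ Nat.find h := by
    rcases Nat.eq_zero_or_pos (Nat.find h) with h0 | h0
    · exfalso; have := Nat.find_spec h; rw [h0] at this; simp at this
    · exact h0
  rw [dep, dif_pos h]
  rcases ho : upi par (Nat.find h - 1) v with _ | u
  · exact absurd ho (Nat.find_min h (by omega))
  · rfl

lemma isSome_iff_le_dep {n : ℕ} {v : V} : (upi par n v).isSome ↔ n ≤ dep par v := by
  constructor
  · intro hs
    by_contra hn
    have : upi par n v = none :=
      upi_none_mono (by omega) (upi_dep_succ_none hacyc v)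
    rw [this] at hs; simp at hs
  · intro hn; exact upi_isSome_mono hn (upi_dep_isSome hacyc v)

lemma dep_par {v u : V} (h : par v = some u) : dep par v = dep par u + 1 := by
  have h1 : dep par u + 1 ≤ dep par v := by
    rw [← isSome_iff_le_dep hacyc, upi_succ_some h]
    exact upi_dep_isSome hacyc u
  have h2 : 1 ≤ dep par v := by
    rw [← isSome_iff_le_dep hacyc, upi_one, h]; rfl
  have h3 : dep par v ≤ dep par u + 1 := by
    have hs : (upi par (dep par v) v).isSome := upi_dep_isSome hacyc v
    have he : upi par (dep par v) v = upi par (dep par v - 1) u := by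
      conv_lhs => rw [show dep par v = (dep par v - 1) + 1 by omega]
      exact upi_succ_some h _
    rw [he] at hs
    have := (isSome_iff_le_dep hacyc).mp hs
    omega
  omega

lemma upi_some_dep {n : ℕ} {a b : V} (h : upi par n b = some a) :
    dep par b = n + dep par a := by
  have hn : n ≤ dep par b := (isSome_iff_le_dep hacyc).mp (by rw [h]; rfl)
  have h1 : dep par b ≤ n + dep par a := by
    have hs : (upi par (dep par b - n) a).isSome := by
      rw [← upi_add_some h, Nat.sub_add_cancel hn]
      exact upi_dep_isSome hacyc b
    have := (isSome_iff_le_dep hacyc).mp hs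
    omega
  have h2 : n + dep par a ≤ dep par b := by
    rw [← isSome_iff_le_dep hacyc, Nat.add_comm, upi_add_some h]
    exact upi_dep_isSome hacyc a
  omega

omit hacyc in
/-- `a` is an ancestor of `b`, numerically. -/
lemma anc_iff {a b : V} : Anc par a b ↔ ∃ n, upi par n b = some a := by
  constructor
  · intro h
    induction h with
    | refl => exact ⟨0, rfl⟩
    | tail hab hbc ih =>
      obtain ⟨n, hn⟩ := ih
      exact ⟨n + 1, by rw [upi_succ_some hbc]; exact hn⟩
  · rintro ⟨n, h⟩
    induction n generalizing b with
    | zero =>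
      rw [upi_zero, Option.some_inj] at h
      rw [h]; exact Relation.ReflTransGen.refl
    | succ n ih =>
      cases hpb : par b with
      | none => rw [upi_succ_none hpb] at h; cases h
      | some u =>
        have h' : upi par n u = some a := by rw [← upi_succ_some hpb]; exact h
        exact (ih h').tail hpb

omit hacyc in
lemma anc_trans {a b c : V} (h1 : Anc par a b) (h2 : Anc par b c) : Anc par a c := h1.trans h2

omit hacyc in
lemma anc_step {u b : V} (h : par b = some u) : Anc par u b :=
  anc_iff.mpr ⟨1, by rw [upi_one, h]⟩

lemma dep_le_of_anc {a b : V} (h : Anc par a b) : dep par a ≤ dep par b := by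
  obtain ⟨n, hn⟩ := anc_iff.mp h
  have := upi_some_dep hacyc hn; omega

lemma upi_dist {a b : V} (h : Anc par a b) :
    upi par (dep par b - dep par a) b = some a := by
  obtain ⟨n, hn⟩ := anc_iff.mp h
  have := upi_some_dep hacyc hn
  have : dep par b - dep par a = n := by omega
  rw [this]; exact hn

lemma anc_antisymm {a b : V} (h1 : Anc par a b) (h2 : Anc par b a) : a = b := by
  obtain ⟨n, hn⟩ := anc_iff.mp h1
  have e1 := upi_some_dep hacyc hn
  obtain ⟨m, hm⟩ := anc_iff.mp h2
  have e2 := upi_some_dep hacyc hm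
  have : n = 0 := by omega
  rw [this, upi_zero, Option.some_inj] at hn
  exact hn.symm

lemma eq_of_anc_dep {a b : V} (h : Anc par a b) (hd : dep par a = dep par b) : a = b := by
  have := upi_dist hacyc h
  rw [hd, Nat.sub_self, upi_zero, Option.some_inj] at this
  exact this.symm

lemma anc_total {a b v : V} (ha : Anc par a v) (hb : Anc par b v) :
    Anc par a b ∨ Anc par b a := by
  have hna := upi_dist hacyc ha
  have hnb := upi_dist hacyc hb
  have hda := dep_le_of_anc hacyc ha
  have hdb := dep_le_of_anc hacyc hb
  rcases le_total (dep par a) (dep par b) with h | h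
  · left
    refine anc_iff.mpr ⟨dep par b - dep par a, ?_⟩
    have : dep par v - dep par a = (dep par b - dep par a) + (dep par v - dep par b) := by omega
    rw [this, upi_add_some hnb] at hna
    exact hna
  · right
    refine anc_iff.mpr ⟨dep par a - dep par b, ?_⟩
    have : dep par v - dep par b = (dep par a - dep par b) + (dep par v - dep par a) := by omega
    rw [this, upi_add_some hna] at hnb
    exact hnb

lemma anc_of_anc_anc_dep {a v b : V} (ha : Anc par a b) (hv : Anc par v b)
    (hd : dep par a ≤ dep par v) : Anc par a v := by
  rcases anc_total hacyc ha hv with h | h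
  · exact h
  · have := dep_le_of_anc hacyc h
    have hde : dep par a = dep par v := by omega
    rw [eq_of_anc_dep hacyc h hde.symm]
    exact Relation.ReflTransGen.refl

omit hacyc in
lemma par_ne_none_of_anc {a v : V} (h : Anc par a v) (hne : a ≠ v) : par v ≠ none := by
  obtain ⟨n, hn⟩ := anc_iff.mp h
  cases n with
  | zero => rw [upi_zero, Option.some_inj] at hn; exact absurd hn.symm hne
  | succ n =>
    intro hp
    cases hpv : par v with
    | none =>
      rw [upi_succ_none hpv] at hn; cases hn
    | some u => rw [hpv] at hp; cases hp

/-- `n`-th ancestor of `v`, as a total function (defaults to `v`). -/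
def au (par : V → Option V) (v : V) (n : ℕ) : V := (upi par n v).getD v

omit hacyc in
@[simp] lemma au_zero (v : V) : au par v 0 = v := rfl

lemma upi_au {n : ℕ} {v : V} (h : n ≤ dep par v) : upi par n v = some (au par v n) := by
  have hs : (upi par n v).isSome := (isSome_iff_le_dep hacyc).mpr h
  rcases ho : upi par n v with _ | u
  · rw [ho] at hs; simp at hs
  · rw [au, ho]; rfl

lemma dep_au {n : ℕ} {v : V} (h : n ≤ dep par v) :
    dep par (au par v n) = dep par v - n := by
  have := upi_some_dep hacyc (upi_au hacyc h)
  omega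

lemma anc_au {n : ℕ} {v : V} (h : n ≤ dep par v) : Anc par (au par v n) v :=
  anc_iff.mpr ⟨n, upi_au hacyc h⟩

lemma au_inj {m n : ℕ} {v : V} (hm : m ≤ dep par v) (hn : n ≤ dep par v)
    (h : au par v m = au par v n) : m = n :=
  upi_inj hacyc (upi_au hacyc hm) (by rw [h]; exact upi_au hacyc hn)

lemma au_eq_of_anc {a b : V} (h : Anc par a b) :
    au par b (dep par b - dep par a) = a := by
  have h1 := upi_dist hacyc h
  have h2 := upi_au hacyc (v := b) (n := dep par b - dep par a)
    (by have := dep_le_of_anc hacyc h; omega)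
  rw [h1, Option.some_inj] at h2
  exact h2.symm

/-- the edge set of a descending path, as a Finset. -/
def dpF (par : V → Option V) (Q : V × V) : Finset V :=
  (Finset.range (dep par Q.2 - dep par Q.1)).image (au par Q.2)

omit hacyc in
lemma dpF_mk (a b : V) :
    dpF par (a, b) = (Finset.range (dep par b - dep par a)).image (au par b) := rfl

lemma mem_dpF_iff {a b v : V} (h : Anc par a b) :
    v ∈ dpF par (a, b) ↔ Anc par v b ∧ dep par a < dep par v := by
  have hab := dep_le_of_anc hacyc h
  constructor
  · intro hv
    rw [dpF_mk, Finset.mem_image] at hv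
    obtain ⟨j, hj, rfl⟩ := hv
    rw [Finset.mem_range] at hj
    have hjd : j ≤ dep par b := by omega
    refine ⟨anc_au hacyc hjd, ?_⟩
    rw [dep_au hacyc hjd]; omega
  · rintro ⟨hvb, hd⟩
    rw [dpF_mk, Finset.mem_image]
    have hvd := dep_le_of_anc hacyc hvb
    refine ⟨dep par b - dep par v, by rw [Finset.mem_range]; omega, ?_⟩
    exact au_eq_of_anc hacyc hvb

lemma coe_dpF {a b : V} (h : Anc par a b) :
    dpEdges par (a, b) = ↑(dpF par (a, b)) := by
  ext v
  have hmem : v ∈ dpEdges par (a, b) ↔ Anc par a v ∧ v ≠ a ∧ Anc par v b := Iff.rfl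
  rw [hmem, Finset.mem_coe, mem_dpF_iff hacyc h]
  constructor
  · rintro ⟨hav, hne, hvb⟩
    refine ⟨hvb, ?_⟩
    have h1 := dep_le_of_anc hacyc hav
    have h2 : dep par a ≠ dep par v := fun he => hne (eq_of_anc_dep hacyc hav he).symm
    omega
  · rintro ⟨hvb, hd⟩
    have hav : Anc par a v := anc_of_anc_anc_dep hacyc h hvb (by omega)
    exact ⟨hav, fun he => by rw [he] at hd; omega, hvb⟩

lemma card_dpF {a b : V} (h : Anc par a b) :
    (dpF par (a, b)).card = dep par b - dep par a := by
  rw [dpF_mk, Finset.card_image_of_injOn, Finset.card_range]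
  intro m hm n hn hmn
  rw [Finset.mem_coe, Finset.mem_range] at hm hn
  have hab := dep_le_of_anc hacyc h
  exact au_inj hacyc (by omega) (by omega) hmn

omit hacyc in
lemma edge_of_mem_dpF {a b v : V} (h : Anc par a b) (hacyc : ParAcyclic par)
    (hv : v ∈ dpF par (a, b)) : par v ≠ none := by
  rw [mem_dpF_iff hacyc h] at hv
  have hav : Anc par a v := anc_of_anc_anc_dep hacyc h hv.1 (by omega)
  exact par_ne_none_of_anc hav (fun he => by rw [he] at hv; omega)

attribute [local instance] Classical.propDecidable

variable {k : ℕ}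

/-- number of paths having an edge weakly below `w`. -/
def nu (par : V → Option V) (P : Fin k → V × V) (w : V) : ℕ :=
  (Finset.univ.filter fun i => ∃ u, Anc par w u ∧ u ∈ dpF par (P i)).card

omit hacyc in
lemma nu_le_k (par : V → Option V) (P : Fin k → V × V) (w : V) : nu par P w ≤ k := by
  calc (Finset.univ.filter fun i => ∃ u, Anc par w u ∧ u ∈ dpF par (P i)).card
      ≤ (Finset.univ : Finset (Fin k)).card := Finset.card_le_card (Finset.filter_subset _ _)
    _ = k := by simp

omit hacyc in
lemma nu_mono {u w : V} (P : Fin k → V × V) (h : Anc par u w) :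
    nu par P w ≤ nu par P u := by
  apply Finset.card_le_card
  intro i hi
  rw [Finset.mem_filter] at hi ⊢
  obtain ⟨_, x, hx1, hx2⟩ := hi
  exact ⟨Finset.mem_univ i, x, anc_trans h hx1, hx2⟩

def childEdges (par : V → Option V) (u : V) : Finset V :=
  Finset.univ.filter fun w => par w = some u

variable {P : Fin k → V × V}

lemma nu_sib_add (hP : ∀ i, IsDescPath par (P i)) {u w w' : V}
    (hw : w ∈ childEdges par u) (hw' : w' ∈ childEdges par u) (hne : w ≠ w') :
    nu par P w + nu par P w' ≤ nu par P u := by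
  rw [childEdges, Finset.mem_filter] at hw hw'
  have hdisj : Disjoint
      (Finset.univ.filter fun i => ∃ x, Anc par w x ∧ x ∈ dpF par (P i))
      (Finset.univ.filter fun i => ∃ x, Anc par w' x ∧ x ∈ dpF par (P i)) := by
    rw [Finset.disjoint_left]
    intro i hi hi'
    rw [Finset.mem_filter] at hi hi'
    obtain ⟨_, x, hx1, hx2⟩ := hi
    obtain ⟨_, y, hy1, hy2⟩ := hi'
    rw [mem_dpF_iff hacyc (hP i)] at hx2 hy2
    have hxy : Anc par x y ∨ Anc par y x := anc_total hacyc hx2.1 hy2.1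
    have hww' : Anc par w w' ∨ Anc par w' w := by
      rcases hxy with hxy | hxy
      · exact anc_total hacyc (anc_trans hx1 hxy) hy1
      · rcases anc_total hacyc hx1 (anc_trans hy1 hxy) with hh | hh
        · exact Or.inl hh
        · exact Or.inr hh
    have hdep : dep par w = dep par w' := by
      rw [dep_par hacyc hw.2, dep_par hacyc hw'.2]
    rcases hww' with hh | hh
    · exact hne (eq_of_anc_dep hacyc hh hdep)
    · exact hne (eq_of_anc_dep hacyc hh hdep.symm).symm
  calc nu par P w + nu par P w'
      = ((Finset.univ.filter fun i => ∃ x, Anc par w x ∧ x ∈ dpF par (P i)) ∪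
         (Finset.univ.filter fun i => ∃ x, Anc par w' x ∧ x ∈ dpF par (P i))).card := by
        rw [nu, nu, Finset.card_union_of_disjoint hdisj]
    _ ≤ nu par P u := by
        apply Finset.card_le_card
        intro i hi
        rw [Finset.mem_union, Finset.mem_filter, Finset.mem_filter] at hi
        rw [Finset.mem_filter]
        rcases hi with ⟨_, x, hx1, hx2⟩ | ⟨_, x, hx1, hx2⟩
        · exact ⟨Finset.mem_univ i, x, anc_trans (anc_step hw.2) hx1, hx2⟩
        · exact ⟨Finset.mem_univ i, x, anc_trans (anc_step hw'.2) hx1, hx2⟩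

/-- heavy child edge of a vertex. -/
def hv (par : V → Option V) (P : Fin k → V × V) (u : V) : V :=
  if h : (childEdges par u).Nonempty then
    (Finset.exists_max_image (childEdges par u) (nu par P) h).choose
  else u

omit hacyc in
lemma hv_mem {u : V} (P : Fin k → V × V) (h : (childEdges par u).Nonempty) :
    hv par P u ∈ childEdges par u := by
  rw [hv, dif_pos h]
  exact (Finset.exists_max_image (childEdges par u) (nu par P) h).choose_spec.1

omit hacyc in
lemma nu_le_hv {u w : V} (P : Fin k → V × V) (hw : w ∈ childEdges par u) :
    nu par P w ≤ nu par P (hv par P u) := by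
  have h : (childEdges par u).Nonempty := ⟨w, hw⟩
  rw [hv, dif_pos h]
  exact (Finset.exists_max_image (childEdges par u) (nu par P) h).choose_spec.2 w hw

omit hacyc in
lemma par_hv {u : V} (P : Fin k → V × V) (h : (childEdges par u).Nonempty) :
    par (hv par P u) = some u := by
  have := hv_mem P h
  rw [childEdges, Finset.mem_filter] at this
  exact this.2

/-- the line through `w` continues above `w`. -/
def lcont (par : V → Option V) (P : Fin k → V × V) (w : V) : Prop :=
  ∃ u, par w = some u ∧ par u ≠ none ∧ w = hv par P u

lemma dep_pos_of_lcont {w : V} (h : lcont par P w) : 1 ≤ dep par w := by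
  obtain ⟨u, hu, _, _⟩ := h
  rw [dep_par hacyc hu]; omega

lemma exists_not_lcont (w : V) : ∃ j, ¬ lcont par P (au par w j) := by
  refine ⟨dep par w, fun hc => ?_⟩
  have hd : dep par (au par w (dep par w)) = 0 := by
    rw [dep_au hacyc (le_refl _)]; omega
  have := dep_pos_of_lcont hacyc hc
  omega

/-- number of steps from `w` up to the top of its heavy line. -/
def Jw (par : V → Option V) (P : Fin k → V × V) (w : V) : ℕ :=
  if h : ∃ j, ¬ lcont par P (au par w j) then Nat.find h else 0

lemma not_lcont_Jw (w : V) : ¬ lcont par P (au par w (Jw par P w)) := by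
  rw [Jw, dif_pos (exists_not_lcont hacyc w)]
  exact Nat.find_spec (exists_not_lcont hacyc w)

lemma lcont_of_lt_Jw {w : V} {j : ℕ} (h : j < Jw par P w) :
    lcont par P (au par w j) := by
  rw [Jw, dif_pos (exists_not_lcont hacyc w)] at h
  have := Nat.find_min (exists_not_lcont hacyc w) h
  tauto

lemma Jw_le_dep (w : V) : Jw par P w ≤ dep par w := by
  by_contra hlt
  push_neg at hlt
  -- show by induction: ∀ j ≤ Jw, j ≤ dep par w
  suffices h : ∀ j, j ≤ Jw par P w → j ≤ dep par w by
    have := h (Jw par P w) (le_refl _); omega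
  intro j hj
  induction j with
  | zero => omega
  | succ j ih =>
    have hjd : j ≤ dep par w := ih (by omega)
    have hcont : lcont par P (au par w j) := lcont_of_lt_Jw hacyc (by omega)
    obtain ⟨u, hu, _, _⟩ := hcont
    have : upi par (j+1) w = some u := by
      rw [Nat.add_comm, upi_add_some (upi_au hacyc hjd), upi_one]
      exact hu
    have := (isSome_iff_le_dep hacyc).mp (by rw [this]; rfl)
    exact this

lemma au_au {w : V} {j i : ℕ} (h : j + i ≤ dep par w) :
    au par (au par w j) i = au par w (j + i) := by
  have hj : j ≤ dep par w := by omega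
  have h1 : upi par (i + j) w = upi par i (au par w j) := upi_add_some (upi_au hacyc hj) i
  have h2 : upi par (i + j) w = some (au par w (j+i)) := by
    rw [Nat.add_comm i j]; exact upi_au hacyc h
  rw [h1] at h2
  have hi : i ≤ dep par (au par w j) := by
    rw [dep_au hacyc hj]; omega
  rw [upi_au hacyc hi, Option.some_inj] at h2
  exact h2

lemma Jw_shift {w : V} {j : ℕ} (hj : j ≤ Jw par P w) :
    Jw par P (au par w j) = Jw par P w - j := by
  have hJd := Jw_le_dep (par := par) (P := P) hacyc w
  have hex := exists_not_lcont (par := par) (P := P) hacyc (au par w j)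
  rw [Jw, dif_pos hex]
  have hspec : ∀ i, au par (au par w j) i = au par w (j + i) → True := fun _ _ => trivial
  apply le_antisymm
  · apply Nat.find_le
    rw [au_au hacyc (by omega : j + (Jw par P w - j) ≤ dep par w)]
    rw [show j + (Jw par P w - j) = Jw par P w by omega]
    exact not_lcont_Jw hacyc w
  · by_contra hlt
    push_neg at hlt
    set i := Nat.find hex with hi
    have hii : ¬ lcont par P (au par (au par w j) i) := Nat.find_spec hex
    have hiJ : i < Jw par P w - j := hlt
    rw [au_au hacyc (by omega : j + i ≤ dep par w)] at hii
    exact hii (lcont_of_lt_Jw hacyc (by omega))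

/-- top of the heavy line through `w`. -/
def lineTop (par : V → Option V) (P : Fin k → V × V) (w : V) : V :=
  au par w (Jw par P w)

lemma lineTop_au {w : V} {j : ℕ} (hj : j ≤ Jw par P w) :
    lineTop par P (au par w j) = lineTop par P w := by
  have hJd := Jw_le_dep (par := par) (P := P) hacyc w
  rw [lineTop, lineTop, Jw_shift hacyc hj, au_au hacyc (by omega)]
  congr 1
  omega

lemma lineTop_of_not_lcont {w : V} (h : ¬ lcont par P w) : lineTop par P w = w := by
  have : Jw par P w = 0 := by
    by_contra h0
    exact h (by simpa using lcont_of_lt_Jw (par := par) (P := P) hacyc (w := w) (j := 0) (by omega))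
  rw [lineTop, this, au_zero]

lemma not_lcont_lineTop (w : V) : ¬ lcont par P (lineTop par P w) :=
  not_lcont_Jw hacyc w

lemma lineTop_idem (w : V) : lineTop par P (lineTop par P w) = lineTop par P w :=
  lineTop_of_not_lcont hacyc (not_lcont_lineTop hacyc w)

lemma anc_lineTop (w : V) : Anc par (lineTop par P w) w :=
  anc_au hacyc (Jw_le_dep hacyc w)

lemma dep_lineTop (w : V) :
    dep par (lineTop par P w) = dep par w - Jw par P w :=
  dep_au hacyc (Jw_le_dep hacyc w)

lemma dist_le_Jw {u w : V} (h : Anc par u w) (heq : lineTop par P u = lineTop par P w) :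
    dep par w - dep par u ≤ Jw par P w := by
  by_contra hlt
  push_neg at hlt
  have h1 : dep par (lineTop par P w) = dep par w - Jw par P w := dep_lineTop hacyc w
  have h2 : Anc par (lineTop par P u) u := anc_lineTop hacyc u
  have h3 : dep par (lineTop par P u) ≤ dep par u := dep_le_of_anc hacyc h2
  have h4 : dep par u ≤ dep par w := dep_le_of_anc hacyc h
  rw [heq, h1] at h3
  have hJ := Jw_le_dep (par := par) (P := P) hacyc w
  omega

lemma edge_lineTop (w : V) (hw : par w ≠ none) : par (lineTop par P w) ≠ none := by
  -- induction on Jw w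
  suffices h : ∀ n (w : V), Jw par P w = n → par w ≠ none → par (lineTop par P w) ≠ none by
    exact h _ w rfl hw
  intro n
  induction n with
  | zero => intro w hJ _; rw [lineTop, hJ, au_zero]; assumption
  | succ n ih =>
    intro w hJ _
    have hc : lcont par P (au par w 0) := lcont_of_lt_Jw hacyc (by omega)
    rw [au_zero] at hc
    obtain ⟨u, hu, hune, _⟩ := hc
    have hau1 : au par w 1 = u := by
      have h1 : (1 : ℕ) ≤ dep par w := by rw [dep_par hacyc hu]; omega
      have := upi_au hacyc h1
      rw [upi_one, hu, Option.some_inj] at this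
      exact this.symm
    have hlt : lineTop par P u = lineTop par P w := by
      rw [← hau1]
      exact lineTop_au hacyc (by omega)
    rw [← hlt]
    exact ih u (by rw [← hau1, Jw_shift hacyc (by omega : 1 ≤ Jw par P w), hJ]; omega) hune

lemma heavy_step {w : V} (hne : w ≠ lineTop par P w) :
    ∃ u, par w = some u ∧ par u ≠ none ∧ w = hv par P u ∧
      lineTop par P u = lineTop par P w := by
  have hJ : Jw par P w ≠ 0 := by
    intro h0
    exact hne (by rw [lineTop, h0, au_zero])
  have hc : lcont par P (au par w 0) := lcont_of_lt_Jw hacyc (by omega)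
  rw [au_zero] at hc
  obtain ⟨u, hu, hune, hwhv⟩ := hc
  have hau1 : au par w 1 = u := by
    have h1 : (1 : ℕ) ≤ dep par w := by rw [dep_par hacyc hu]; omega
    have := upi_au hacyc h1
    rw [upi_one, hu, Option.some_inj] at this
    exact this.symm
  refine ⟨u, hu, hune, hwhv, ?_⟩
  rw [← hau1]
  exact lineTop_au hacyc (by omega)

lemma dep_lt_card (v : V) : dep par v < Fintype.card V := by
  have hinj : Set.InjOn (au par v) ↑(Finset.range (dep par v + 1)) := by
    intro m hm n hn hmn
    rw [Finset.coe_range, Set.mem_Iio] at hm hn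
    exact au_inj hacyc (by omega) (by omega) hmn
  have := Finset.card_le_card_of_injOn (au par v) (fun _ _ => Finset.mem_univ _) hinj
  rw [Finset.card_range] at this
  have : dep par v + 1 ≤ Fintype.card V := by simpa using this
  omega

/-- `s`-th edge (from the top) of the heavy line topped at `t`. -/
def lE (par : V → Option V) (P : Fin k → V × V) (t : V) (s : ℕ) : V :=
  (hv par P)^[s] t

omit hacyc in
@[simp] lemma lE_zero (t : V) : lE par P t 0 = t := rfl

omit hacyc in
lemma lE_succ (t : V) (s : ℕ) : lE par P t (s+1) = hv par P (lE par P t s) :=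
  Function.iterate_succ_apply' _ _ _

def onLine (par : V → Option V) (P : Fin k → V × V) (t : V) (s : ℕ) : Prop :=
  lineTop par P (lE par P t s) = t ∧ dep par (lE par P t s) = dep par t + s

lemma exists_not_onLine (t : V) : ∃ s, ¬ onLine par P t s := by
  refine ⟨Fintype.card V, fun h => ?_⟩
  have := dep_lt_card hacyc (lE par P t (Fintype.card V))
  have := h.2
  omega

def llen (par : V → Option V) (P : Fin k → V × V) (t : V) : ℕ :=
  if h : ∃ s, ¬ onLine par P t s then Nat.find h else 0

lemma onLine_of_lt_llen {t : V} {s : ℕ} (h : s < llen par P t) : onLine par P t s := by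
  rw [llen, dif_pos (exists_not_onLine hacyc t)] at h
  have := Nat.find_min (exists_not_onLine hacyc t) h
  tauto

lemma lt_llen_iff {t : V} {s : ℕ} : s < llen par P t ↔ ∀ j ≤ s, onLine par P t j := by
  rw [llen, dif_pos (exists_not_onLine hacyc t), Nat.lt_find_iff]
  constructor
  · intro h j hj
    have := h j hj; tauto
  · intro h j hj
    exact not_not_intro (h j hj)

lemma lE_step {t : V} {s : ℕ} (h1 : onLine par P t s) (h2 : onLine par P t (s+1)) :
    par (lE par P t (s+1)) = some (lE par P t s) := by
  have hne : (childEdges par (lE par P t s)).Nonempty := by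
    by_contra hemp
    have : hv par P (lE par P t s) = lE par P t s := by
      rw [hv, dif_neg hemp]
    have h2' := h2.2
    have h1' := h1.2
    rw [lE_succ, this] at h2'
    omega
  rw [lE_succ]
  exact par_hv P hne

lemma anc_lE {t : V} {s s' : ℕ} (hss : s ≤ s') (h : s' < llen par P t) :
    Anc par (lE par P t s) (lE par P t s') := by
  obtain ⟨d, rfl⟩ := Nat.exists_eq_add_of_le hss
  clear hss
  induction d with
  | zero => exact Relation.ReflTransGen.refl
  | succ d ih =>
    have hd : s + d < llen par P t := by omega
    have hstep := lE_step hacyc (onLine_of_lt_llen hacyc hd) (onLine_of_lt_llen hacyc h)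
    exact anc_trans (ih (by omega)) (anc_step hstep)

lemma edge_lE {t : V} (ht : par t ≠ none) {s : ℕ} (h : s < llen par P t) :
    par (lE par P t s) ≠ none := by
  cases s with
  | zero => rw [lE_zero]; exact ht
  | succ s =>
    have hstep := lE_step hacyc (onLine_of_lt_llen hacyc (by omega : s < llen par P t))
      (onLine_of_lt_llen hacyc h)
    rw [hstep]
    exact Option.some_ne_none _

/-- every edge sits on its heavy line. -/
lemma mem_line {w : V} (hw : par w ≠ none) :
    lE par P (lineTop par P w) (dep par w - dep par (lineTop par P w)) = w ∧
    dep par w - dep par (lineTop par P w) < llen par P (lineTop par P w) := by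
  suffices H : ∀ s (w : V), par w ≠ none → dep par w - dep par (lineTop par P w) = s →
      lE par P (lineTop par P w) s = w ∧ s < llen par P (lineTop par P w) by
    exact H _ w hw rfl
  intro s
  induction s with
  | zero =>
    intro w hw hs
    have h1 : Anc par (lineTop par P w) w := anc_lineTop hacyc w
    have h2 : dep par (lineTop par P w) ≤ dep par w := dep_le_of_anc hacyc h1
    have heq : lineTop par P w = w := eq_of_anc_dep hacyc h1 (by omega)
    constructor
    · rw [lE_zero, heq]
    · have hon : onLine par P (lineTop par P w) 0 := by
        constructor
        · rw [lE_zero]; exact lineTop_idem hacyc w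
        · rw [lE_zero]; omega
      rw [llen, dif_pos (exists_not_onLine hacyc _)]
      rw [Nat.pos_iff_ne_zero, Ne, Nat.find_eq_zero]
      exact not_not_intro hon
  | succ s ih =>
    intro w hw hs
    have h1 : Anc par (lineTop par P w) w := anc_lineTop hacyc w
    have h2 : dep par (lineTop par P w) ≤ dep par w := dep_le_of_anc hacyc h1
    have hne : w ≠ lineTop par P w := by
      intro he
      rw [← he] at hs
      omega
    obtain ⟨u, hu, hune, hwhv, hlt⟩ := heavy_step hacyc hne
    have hdu : dep par w = dep par u + 1 := dep_par hacyc hu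
    have hus : dep par u - dep par (lineTop par P u) = s := by rw [hlt]; omega
    obtain ⟨ih1, ih2⟩ := ih u hune hus
    rw [hlt] at ih1 ih2
    have hE : lE par P (lineTop par P w) (s+1) = w := by
      rw [lE_succ, ih1, ← hwhv]
    refine ⟨hE, ?_⟩
    rw [lt_llen_iff hacyc]
    intro j hj
    rcases Nat.lt_or_ge j (s+1) with hjs | hjs
    · exact onLine_of_lt_llen hacyc (by omega)
    · have : j = s + 1 := by omega
      subst this
      constructor
      · rw [hE]
      · rw [hE]
        omega

variable (par P) in
/-- trace of path `i` on the line topped at `t`, in line coordinates. -/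
def traceS (t : V) (i : Fin k) : Finset ℕ :=
  (Finset.range (llen par P t)).filter (fun s => lE par P t s ∈ dpF par (P i))

omit hacyc in
lemma mem_traceS {t : V} {i : Fin k} {s : ℕ} :
    s ∈ traceS par P t i ↔ s < llen par P t ∧ lE par P t s ∈ dpF par (P i) := by
  rw [traceS, Finset.mem_filter, Finset.mem_range]

variable {hP : ∀ i, IsDescPath par (P i)}

lemma trace_between (hP : ∀ i, IsDescPath par (P i)) {t : V} {i : Fin k} {s s' s'' : ℕ}
    (hs : s ∈ traceS par P t i) (hs' : s' ∈ traceS par P t i)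
    (h1 : s ≤ s'') (h2 : s'' ≤ s') : s'' ∈ traceS par P t i := by
  rw [mem_traceS] at hs hs' ⊢
  obtain ⟨hsl, hsd⟩ := hs
  obtain ⟨hsl', hsd'⟩ := hs'
  have hll : s'' < llen par P t := by omega
  refine ⟨hll, ?_⟩
  rw [mem_dpF_iff hacyc (hP i)] at hsd hsd' ⊢
  constructor
  · exact anc_trans (anc_lE hacyc h2 hsl') hsd'.1
  · have d1 : dep par (lE par P t s) = dep par t + s := (onLine_of_lt_llen hacyc hsl).2
    have d2 : dep par (lE par P t s'') = dep par t + s'' := (onLine_of_lt_llen hacyc hll).2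
    have := hsd.2
    omega

variable (par P) in
/-- paths covering the `s`-th edge of line `t`. -/
def CovSet (t : V) (s : ℕ) : Finset (Fin k) :=
  Finset.univ.filter (fun i => lE par P t s ∈ dpF par (P i))

variable (par P) in
/-- bottommost coordinate of the trace of `i` on line `t`. -/
def TB (t : V) (i : Fin k) : ℕ :=
  if h : (traceS par P t i).Nonempty then (traceS par P t i).max' h else 0

omit hacyc in
lemma TB_mem {t : V} {i : Fin k} (h : (traceS par P t i).Nonempty) :
    TB par P t i ∈ traceS par P t i := by
  rw [TB, dif_pos h]; exact Finset.max'_mem _ h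

omit hacyc in
lemma TB_ge {t : V} {i : Fin k} {s : ℕ} (h : s ∈ traceS par P t i) :
    s ≤ TB par P t i := by
  rw [TB, dif_pos ⟨s, h⟩]; exact Finset.le_max' _ s h

variable (par P) in
/-- bottom coordinate of the greedy window seeded at `s` on line `t`. -/
def reach (t : V) (s : ℕ) : ℕ :=
  if h : ((CovSet par P t s).image (TB par P t)).Nonempty then
    max (((CovSet par P t s).image (TB par P t)).max' h) s
  else s

omit hacyc in
lemma reach_ge (t : V) (s : ℕ) : s ≤ reach par P t s := by
  rw [reach]
  split
  · exact le_max_right _ _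
  · exact le_refl s

omit hacyc in
lemma reach_ge_TB {t : V} {s : ℕ} {i : Fin k} (h : i ∈ CovSet par P t s) :
    TB par P t i ≤ reach par P t s := by
  have hm : TB par P t i ∈ (CovSet par P t s).image (TB par P t) :=
    Finset.mem_image_of_mem _ h
  rw [reach, dif_pos ⟨_, hm⟩]
  exact le_trans (Finset.le_max' _ _ hm) (le_max_left _ _)

omit hacyc in
lemma cov_of_trace {t : V} {i : Fin k} {s : ℕ} (h : s ∈ traceS par P t i) :
    i ∈ CovSet par P t s := by
  rw [mem_traceS] at h
  rw [CovSet, Finset.mem_filter]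
  exact ⟨Finset.mem_univ i, h.2⟩

omit hacyc in
lemma trace_of_cov {t : V} {i : Fin k} {s : ℕ} (h : i ∈ CovSet par P t s)
    (hs : s < llen par P t) : s ∈ traceS par P t i := by
  rw [CovSet, Finset.mem_filter] at h
  rw [mem_traceS]
  exact ⟨hs, h.2⟩

lemma cov_line (hcover' : ∀ v, par v ≠ none → ∃ i, v ∈ dpF par (P i))
    {t : V} (ht : par t ≠ none) {s : ℕ} (hs : s < llen par P t) :
    (CovSet par P t s).Nonempty := by
  obtain ⟨i, hi⟩ := hcover' (lE par P t s) (edge_lE hacyc ht hs)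
  exact ⟨i, by rw [CovSet, Finset.mem_filter]; exact ⟨Finset.mem_univ i, hi⟩⟩

lemma reach_witness (hcover' : ∀ v, par v ≠ none → ∃ i, v ∈ dpF par (P i))
    {t : V} (ht : par t ≠ none) {s : ℕ} (hs : s < llen par P t) :
    ∃ i ∈ CovSet par P t s, TB par P t i = reach par P t s := by
  have hcs := cov_line hacyc hcover' ht hs
  have him : ((CovSet par P t s).image (TB par P t)).Nonempty := hcs.image _
  obtain ⟨i₀, hi₀, hTB⟩ := Finset.mem_image.mp (Finset.max'_mem _ him)
  refine ⟨i₀, hi₀, ?_⟩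
  rw [reach, dif_pos him, hTB]
  have : s ≤ TB par P t i₀ := TB_ge (trace_of_cov hi₀ hs)
  omega

lemma reach_lt_llen (hcover' : ∀ v, par v ≠ none → ∃ i, v ∈ dpF par (P i))
    {t : V} (ht : par t ≠ none) {s : ℕ} (hs : s < llen par P t) :
    reach par P t s < llen par P t := by
  obtain ⟨i₀, hi₀, hTB⟩ := reach_witness hacyc hcover' ht hs
  rw [← hTB]
  have := TB_mem (⟨s, trace_of_cov hi₀ hs⟩ : (traceS par P t i₀).Nonempty)
  rw [mem_traceS] at this
  exact this.1

lemma window_sub (hP : ∀ i, IsDescPath par (P i))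
    (hcover' : ∀ v, par v ≠ none → ∃ i, v ∈ dpF par (P i))
    {t : V} (ht : par t ≠ none) {s : ℕ} (hs : s < llen par P t) :
    ∃ i, i ∈ CovSet par P t s ∧ TB par P t i = reach par P t s ∧
      ∀ s'', s ≤ s'' → s'' ≤ reach par P t s → s'' ∈ traceS par P t i := by
  obtain ⟨i₀, hi₀, hTB⟩ := reach_witness hacyc hcover' ht hs
  refine ⟨i₀, hi₀, hTB, fun s'' h1 h2 => ?_⟩
  have htr : s ∈ traceS par P t i₀ := trace_of_cov hi₀ hs
  have hTBm : TB par P t i₀ ∈ traceS par P t i₀ := TB_mem ⟨s, htr⟩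
  exact trace_between hacyc hP htr hTBm h1 (by omega)

variable (par P) in
/-- seeds of the greedy windows on line `t`. -/
def sg (t : V) : ℕ → ℕ
  | 0 => 0
  | r+1 => reach par P t (sg t r) + 1

omit hacyc in
lemma sg_lt_succ (t : V) (r : ℕ) : sg par P t r < sg par P t (r+1) := by
  have := reach_ge (par := par) (P := P) t (sg par P t r)
  calc sg par P t r ≤ reach par P t (sg par P t r) := this
    _ < reach par P t (sg par P t r) + 1 := by omega
    _ = sg par P t (r+1) := rfl

omit hacyc in
lemma sg_mono {t : V} {r r' : ℕ} (h : r ≤ r') : sg par P t r ≤ sg par P t r' := by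
  induction r' with
  | zero => simp_all
  | succ r' ih =>
    rcases Nat.lt_or_ge r (r'+1) with hh | hh
    · exact le_trans (ih (by omega)) (le_of_lt (sg_lt_succ t r'))
    · have : r = r' + 1 := by omega
      rw [this]

omit hacyc in
lemma sg_ge_self (t : V) (r : ℕ) : r ≤ sg par P t r := by
  induction r with
  | zero => omega
  | succ r ih => have := sg_lt_succ (par := par) (P := P) t r; omega

variable (par P) in
/-- number of greedy windows on line `t`. -/
def nw (t : V) : ℕ :=
  Nat.find (⟨llen par P t, sg_ge_self t (llen par P t)⟩ : ∃ r, llen par P t ≤ sg par P t r)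

omit hacyc in
lemma sg_lt_llen_of_lt_nw {t : V} {r : ℕ} (h : r < nw par P t) :
    sg par P t r < llen par P t := by
  have := Nat.find_min (⟨llen par P t, sg_ge_self t (llen par P t)⟩ :
    ∃ r, llen par P t ≤ sg par P t r) h
  omega

omit hacyc in
lemma llen_le_sg_nw (t : V) : llen par P t ≤ sg par P t (nw par P t) :=
  Nat.find_spec (⟨llen par P t, sg_ge_self t (llen par P t)⟩ :
    ∃ r, llen par P t ≤ sg par P t r)

omit hacyc in
lemma window_cover {t : V} {s : ℕ} (hs : s < llen par P t) :
    ∃ r < nw par P t, sg par P t r ≤ s ∧ s ≤ reach par P t (sg par P t r) := by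
  have hex : ∃ r, s < sg par P t (r+1) := by
    refine ⟨s, ?_⟩
    have := sg_ge_self (par := par) (P := P) t (s+1)
    omega
  set r := Nat.find hex with hr
  have hspec : s < sg par P t (r+1) := Nat.find_spec hex
  have hle : sg par P t r ≤ s := by
    rcases Nat.eq_zero_or_pos r with h0 | h0
    · have h00 : sg par P t 0 = 0 := rfl
      rw [h0, h00]; omega
    · have := Nat.find_min hex (m := r - 1) (by omega)
      push_neg at this
      have heq : r - 1 + 1 = r := by omega
      rw [heq] at this
      exact this
  have hrnw : r < nw par P t := by
    by_contra hge
    push_neg at hge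
    have h1 := llen_le_sg_nw (par := par) (P := P) t
    have h2 := sg_mono (par := par) (P := P) (t := t) hge
    omega
  refine ⟨r, hrnw, hle, ?_⟩
  have : sg par P t (r+1) = reach par P t (sg par P t r) + 1 := rfl
  omega

omit hacyc in
lemma au_one {v u : V} (h : par v = some u) : au par v 1 = u := by
  rw [au, upi_one, h]; rfl

variable (par P) in
/-- the greedy window with seed `s` on line `t`, as a descending path. -/
def wQ (t : V) (s : ℕ) : V × V :=
  (au par (lE par P t s) 1, lE par P t (reach par P t s))

lemma mem_dpF_iff' {Q : V × V} (h : Anc par Q.1 Q.2) {v : V} :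
    v ∈ dpF par Q ↔ Anc par v Q.2 ∧ dep par Q.1 < dep par v :=
  mem_dpF_iff hacyc (a := Q.1) (b := Q.2) h (v := v)

lemma coe_dpF' {Q : V × V} (h : Anc par Q.1 Q.2) :
    dpEdges par Q = ↑(dpF par Q) :=
  coe_dpF hacyc (a := Q.1) (b := Q.2) h

lemma card_dpF' {Q : V × V} (h : Anc par Q.1 Q.2) :
    (dpF par Q).card = dep par Q.2 - dep par Q.1 :=
  card_dpF hacyc (a := Q.1) (b := Q.2) h

omit hacyc in
lemma wQ_fst (t : V) (s : ℕ) : (wQ par P t s).1 = au par (lE par P t s) 1 := rfl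

omit hacyc in
lemma wQ_snd (t : V) (s : ℕ) : (wQ par P t s).2 = lE par P t (reach par P t s) := rfl

lemma wQ_top_par {t : V} (ht : par t ≠ none) {s : ℕ} (hs : s < llen par P t) :
    par (lE par P t s) = some ((wQ par P t s).1) := by
  cases hp : par (lE par P t s) with
  | none => exact absurd hp (edge_lE hacyc ht hs)
  | some u => rw [wQ_fst, au_one hp]

lemma dep_wQ1 {t : V} (ht : par t ≠ none) {s : ℕ} (hs : s < llen par P t) :
    dep par (wQ par P t s).1 + 1 = dep par t + s := by
  have h1 := dep_par hacyc (wQ_top_par hacyc ht hs)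
  have h2 := (onLine_of_lt_llen hacyc hs).2
  omega

lemma anc_wQ (hcover' : ∀ v, par v ≠ none → ∃ i, v ∈ dpF par (P i))
    {t : V} (ht : par t ≠ none) {s : ℕ} (hs : s < llen par P t) :
    Anc par (wQ par P t s).1 (wQ par P t s).2 := by
  rw [wQ_snd]
  exact anc_trans (anc_step (wQ_top_par hacyc ht hs))
    (anc_lE hacyc (reach_ge t s) (reach_lt_llen hacyc hcover' ht hs))

lemma mem_dpF_wQ (hcover' : ∀ v, par v ≠ none → ∃ i, v ∈ dpF par (P i))
    {t : V} (ht : par t ≠ none) {s : ℕ} (hs : s < llen par P t) {v : V} :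
    v ∈ dpF par (wQ par P t s) ↔
      ∃ s'', s ≤ s'' ∧ s'' ≤ reach par P t s ∧ v = lE par P t s'' := by
  have hrl := reach_lt_llen hacyc hcover' ht hs
  have hd1 := dep_wQ1 hacyc ht hs
  have hd2 : dep par (lE par P t (reach par P t s)) = dep par t + reach par P t s :=
    (onLine_of_lt_llen hacyc hrl).2
  rw [mem_dpF_iff' hacyc (anc_wQ hacyc hcover' ht hs)]
  constructor
  · rintro ⟨hvb, hdv⟩
    rw [wQ_snd] at hvb
    have hvd : dep par v ≤ dep par t + reach par P t s := by
      have := dep_le_of_anc hacyc hvb; omega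
    refine ⟨dep par v - dep par t, by omega, by omega, ?_⟩
    have h1 : Anc par (lE par P t (dep par v - dep par t)) (lE par P t (reach par P t s)) :=
      anc_lE hacyc (by omega) hrl
    have h2 : dep par (lE par P t (dep par v - dep par t)) = dep par v := by
      have := (onLine_of_lt_llen hacyc (show dep par v - dep par t < llen par P t by omega)).2
      omega
    rcases anc_total hacyc hvb h1 with hh | hh
    · exact eq_of_anc_dep hacyc hh (by omega)
    · exact (eq_of_anc_dep hacyc hh (by omega)).symm
  · rintro ⟨s'', h1, h2, rfl⟩
    have hsl : s'' < llen par P t := by omega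
    constructor
    · rw [wQ_snd]; exact anc_lE hacyc h2 hrl
    · have := (onLine_of_lt_llen hacyc hsl).2
      omega

lemma card_dpF_wQ (hcover' : ∀ v, par v ≠ none → ∃ i, v ∈ dpF par (P i))
    {t : V} (ht : par t ≠ none) {s : ℕ} (hs : s < llen par P t) :
    (dpF par (wQ par P t s)).card = reach par P t s - s + 1 := by
  have hrl := reach_lt_llen hacyc hcover' ht hs
  have hd1 := dep_wQ1 hacyc ht hs
  have hd2 : dep par (wQ par P t s).2 = dep par t + reach par P t s := by
    rw [wQ_snd]; exact (onLine_of_lt_llen hacyc hrl).2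
  rw [card_dpF' hacyc (anc_wQ hacyc hcover' ht hs), hd2]
  have := reach_ge (par := par) (P := P) t s
  omega

lemma wQ_ne (hcover' : ∀ v, par v ≠ none → ∃ i, v ∈ dpF par (P i))
    {t : V} (ht : par t ≠ none) {s : ℕ} (hs : s < llen par P t) :
    (wQ par P t s).1 ≠ (wQ par P t s).2 := by
  intro he
  have hrl := reach_lt_llen hacyc hcover' ht hs
  have hd1 := dep_wQ1 hacyc ht hs
  have hd2 : dep par (wQ par P t s).2 = dep par t + reach par P t s := by
    rw [wQ_snd]; exact (onLine_of_lt_llen hacyc hrl).2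
  have := reach_ge (par := par) (P := P) t s
  rw [he] at hd1
  omega

lemma wQ_subpath (hP : ∀ i, IsDescPath par (P i))
    (hcover' : ∀ v, par v ≠ none → ∃ i, v ∈ dpF par (P i))
    {t : V} (ht : par t ≠ none) {s : ℕ} (hs : s < llen par P t) :
    ∃ i, IsSubpath par (P i) (wQ par P t s) := by
  obtain ⟨i, hic, hTB, hwin⟩ := window_sub hacyc hP hcover' ht hs
  have hsm : s ∈ traceS par P t i := trace_of_cov hic hs
  have hrm : reach par P t s ∈ traceS par P t i :=
    hwin _ (reach_ge t s) (le_refl _)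
  rw [mem_traceS] at hsm hrm
  have hsd := (mem_dpF_iff' hacyc (hP i)).mp hsm.2
  have hrd := (mem_dpF_iff' hacyc (hP i)).mp hrm.2
  have hd1 := dep_wQ1 hacyc ht hs
  have hds : dep par (lE par P t s) = dep par t + s := (onLine_of_lt_llen hacyc hs).2
  refine ⟨i, ?_, ?_, ?_⟩
  · -- Anc (P i).1 (wQ).1
    have hw1b : Anc par (wQ par P t s).1 (P i).2 :=
      anc_trans (anc_step (wQ_top_par hacyc ht hs)) hsd.1
    exact anc_of_anc_anc_dep hacyc (hP i) hw1b (by omega)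
  · exact anc_wQ hacyc hcover' ht hs
  · rw [wQ_snd]; exact hrd.1

/-- a path shares an edge with a window iff its trace meets the window interval. -/
lemma meet_iff (hP : ∀ i, IsDescPath par (P i))
    (hcover' : ∀ v, par v ≠ none → ∃ i, v ∈ dpF par (P i))
    {t : V} (ht : par t ≠ none) {s : ℕ} (hs : s < llen par P t) {j : Fin k} :
    (dpEdges par (wQ par P t s) ∩ dpEdges par (P j)).Nonempty ↔
      ∃ s'', s ≤ s'' ∧ s'' ≤ reach par P t s ∧ s'' ∈ traceS par P t j := by
  rw [coe_dpF' hacyc (anc_wQ hacyc hcover' ht hs), coe_dpF' hacyc (hP j)]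
  constructor
  · rintro ⟨v, hv1, hv2⟩
    rw [Finset.mem_coe] at hv1 hv2
    obtain ⟨s'', h1, h2, rfl⟩ := (mem_dpF_wQ hacyc hcover' ht hs).mp hv1
    refine ⟨s'', h1, h2, ?_⟩
    rw [mem_traceS]
    exact ⟨by have := reach_lt_llen hacyc hcover' ht hs; omega, hv2⟩
  · rintro ⟨s'', h1, h2, htr⟩
    rw [mem_traceS] at htr
    refine ⟨lE par P t s'', ?_, ?_⟩
    · rw [Finset.mem_coe, mem_dpF_wQ hacyc hcover' ht hs]
      exact ⟨s'', h1, h2, rfl⟩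
    · rw [Finset.mem_coe]; exact htr.2

/-- the greedy property: no path meets two windows that are two apart. -/
lemma no_far_meet (hP : ∀ i, IsDescPath par (P i))
    (hcover' : ∀ v, par v ≠ none → ∃ i, v ∈ dpF par (P i))
    {t : V} (ht : par t ≠ none) {j : Fin k} {r r' : ℕ}
    (hr' : r' < nw par P t) (hrr : r + 2 ≤ r')
    (h1 : ∃ s'', sg par P t r ≤ s'' ∧ s'' ≤ reach par P t (sg par P t r) ∧
      s'' ∈ traceS par P t j)
    (h2 : ∃ s'', sg par P t r' ≤ s'' ∧ s'' ≤ reach par P t (sg par P t r') ∧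
      s'' ∈ traceS par P t j) : False := by
  obtain ⟨s₁, h1a, h1b, h1t⟩ := h1
  obtain ⟨s₂, h2a, h2b, h2t⟩ := h2
  have hσ1 : sg par P t (r+1) = reach par P t (sg par P t r) + 1 := rfl
  have hσ2 : sg par P t (r+2) = reach par P t (sg par P t (r+1)) + 1 := rfl
  have hm1 : sg par P t (r+1) ≤ sg par P t r' := sg_mono (by omega)
  have hm2 : sg par P t (r+2) ≤ sg par P t r' := sg_mono (by omega)
  have hσtr : sg par P t (r+1) ∈ traceS par P t j :=
    trace_between hacyc hP h1t h2t (by omega) (by omega)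
  have hcov : j ∈ CovSet par P t (sg par P t (r+1)) := cov_of_trace hσtr
  have hTB : s₂ ≤ TB par P t j := TB_ge h2t
  have hre : TB par P t j ≤ reach par P t (sg par P t (r+1)) := reach_ge_TB hcov
  omega

/-- at most two windows of a line meet a given path. -/
lemma card_meet_le_two (hP : ∀ i, IsDescPath par (P i))
    (hcover' : ∀ v, par v ≠ none → ∃ i, v ∈ dpF par (P i))
    {t : V} (ht : par t ≠ none) (j : Fin k) :
    ((Finset.range (nw par P t)).filter (fun r =>
      (dpEdges par (wQ par P t (sg par P t r)) ∩ dpEdges par (P j)).Nonempty)).card ≤ 2 := by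
  set S := (Finset.range (nw par P t)).filter (fun r =>
      (dpEdges par (wQ par P t (sg par P t r)) ∩ dpEdges par (P j)).Nonempty) with hS
  rcases S.eq_empty_or_nonempty with he | hne
  · rw [he]; simp
  · have hsub : S ⊆ {S.min' hne, S.min' hne + 1} := by
      intro x hx
      have hmin := S.min'_le x hx
      have hxm : x ∈ S := hx
      rcases Nat.lt_or_ge x (S.min' hne + 2) with hlt | hge
      · rw [Finset.mem_insert, Finset.mem_singleton]; omega
      · exfalso
        have hm2 := Finset.mem_filter.mp (S.min'_mem hne)
        have hx2 := Finset.mem_filter.mp hxm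
        have hm1 := Finset.mem_range.mp hm2.1
        have hx1 := Finset.mem_range.mp hx2.1
        have hml : sg par P t (S.min' hne) < llen par P t := sg_lt_llen_of_lt_nw hm1
        have hxl : sg par P t x < llen par P t := sg_lt_llen_of_lt_nw hx1
        exact no_far_meet hacyc hP hcover' ht hx1 (by omega)
          ((meet_iff hacyc hP hcover' ht hml).mp hm2.2)
          ((meet_iff hacyc hP hcover' ht hxl).mp hx2.2)
    calc S.card ≤ ({S.min' hne, S.min' hne + 1} : Finset ℕ).card := Finset.card_le_card hsub
      _ ≤ 2 := by
          apply le_trans (Finset.card_insert_le _ _)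
          simp

lemma par_au {b : V} {s : ℕ} (h : s + 1 ≤ dep par b) :
    par (au par b s) = some (au par b (s+1)) := by
  have h1 : upi par (1 + s) b = upi par 1 (au par b s) :=
    upi_add_some (upi_au hacyc (by omega)) 1
  have h2 : upi par (s + 1) b = some (au par b (s+1)) := upi_au hacyc h
  have h3 : upi par 1 (au par b s) = some (au par b (s+1)) := by
    rw [← h1, Nat.add_comm 1 s]; exact h2
  rw [upi_one] at h3
  exact h3

omit hacyc in
lemma mem_dpF_au {j : Fin k} {s : ℕ} (h : s < dep par (P j).2 - dep par (P j).1) :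
    au par (P j).2 s ∈ dpF par (P j) :=
  Finset.mem_image_of_mem _ (Finset.mem_range.mpr h)

omit hacyc in
lemma nu_pos {j : Fin k} {s : ℕ} (h : s < dep par (P j).2 - dep par (P j).1) :
    1 ≤ nu par P (au par (P j).2 s) := by
  rw [nu]
  refine Finset.card_pos.mpr ⟨j, ?_⟩
  rw [Finset.mem_filter]
  exact ⟨Finset.mem_univ j, au par (P j).2 s, Relation.ReflTransGen.refl, mem_dpF_au h⟩

variable (par P) in
/-- coordinates (from the bottom of path `j`) where the heavy line changes. -/
def SwS (j : Fin k) : Finset ℕ :=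
  (Finset.range (dep par (P j).2 - dep par (P j).1)).filter (fun s =>
    s + 1 < dep par (P j).2 - dep par (P j).1 ∧
    lineTop par P (au par (P j).2 (s+1)) ≠ lineTop par P (au par (P j).2 s))

lemma halving (hP : ∀ i, IsDescPath par (P i)) {j : Fin k} :
    ∀ s, s < dep par (P j).2 - dep par (P j).1 →
      2 ^ (((SwS par P j).filter (· < s)).card) ≤ nu par P (au par (P j).2 s) := by
  intro s
  induction s with
  | zero =>
    intro hs
    have he : (SwS par P j).filter (· < 0) = ∅ :=
      Finset.filter_eq_empty_iff.mpr (by intro x _ hx; omega)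
    rw [he, Finset.card_empty, pow_zero]
    exact nu_pos hs
  | succ s ih =>
    intro hs
    have hsn : s < (dep par (P j).2 - dep par (P j).1) := by omega
    have hdb : (dep par (P j).2 - dep par (P j).1) ≤ dep par (P j).2 := by omega
    have hpar : par (au par (P j).2 s) = some (au par (P j).2 (s+1)) := par_au hacyc (by omega)
    have hmono : nu par P (au par (P j).2 s) ≤ nu par P (au par (P j).2 (s+1)) :=
      nu_mono P (anc_step hpar)
    by_cases hsw : s ∈ SwS par P j
    · -- a switch: the count may go up by one, but nu at least doubles
      have hsub : (SwS par P j).filter (· < s+1) ⊆ insert s ((SwS par P j).filter (· < s)) := by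
        intro x hx
        rw [Finset.mem_filter] at hx
        rcases Nat.lt_or_ge x s with h | h
        · exact Finset.mem_insert_of_mem (Finset.mem_filter.mpr ⟨hx.1, h⟩)
        · have : x = s := by omega
          rw [this]; exact Finset.mem_insert_self _ _
      have hcard : ((SwS par P j).filter (· < s+1)).card ≤
          ((SwS par P j).filter (· < s)).card + 1 :=
        le_trans (Finset.card_le_card hsub) (Finset.card_insert_le _ _)
      have hne : au par (P j).2 s ≠ hv par P (au par (P j).2 (s+1)) := by
        intro heq
        rw [SwS, Finset.mem_filter] at hsw
        have hpu : par (au par (P j).2 (s+1)) ≠ none := by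
          rw [par_au hacyc (show s + 2 ≤ dep par (P j).2 by omega)]
          exact Option.some_ne_none _
        have hlc : lcont par P (au par (P j).2 s) := ⟨au par (P j).2 (s+1), hpar, hpu, heq⟩
        have hJ1 : 1 ≤ Jw par P (au par (P j).2 s) := by
          by_contra h0
          push_neg at h0
          have := not_lcont_Jw (par := par) (P := P) hacyc (au par (P j).2 s)
          rw [show Jw par P (au par (P j).2 s) = 0 by omega, au_zero] at this
          exact this hlc
        have := lineTop_au (par := par) (P := P) hacyc (w := au par (P j).2 s) (j := 1) hJ1
        rw [au_one hpar] at this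
        exact hsw.2.2 this
      have hch : au par (P j).2 s ∈ childEdges par (au par (P j).2 (s+1)) := by
        rw [childEdges, Finset.mem_filter]
        exact ⟨Finset.mem_univ _, hpar⟩
      have hdouble : 2 * nu par P (au par (P j).2 s) ≤ nu par P (au par (P j).2 (s+1)) := by
        have h1 : nu par P (au par (P j).2 s) ≤ nu par P (hv par P (au par (P j).2 (s+1))) :=
          nu_le_hv P hch
        have h2 := nu_sib_add hacyc hP hch (hv_mem P ⟨_, hch⟩) hne
        omega
      calc 2 ^ ((SwS par P j).filter (· < s+1)).card
          ≤ 2 ^ (((SwS par P j).filter (· < s)).card + 1) :=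
            Nat.pow_le_pow_right (by omega) hcard
        _ = 2 * 2 ^ ((SwS par P j).filter (· < s)).card := by ring
        _ ≤ 2 * nu par P (au par (P j).2 s) := by
            have := ih hsn; omega
        _ ≤ nu par P (au par (P j).2 (s+1)) := hdouble
    · -- no switch: the count is unchanged
      have heq : (SwS par P j).filter (· < s+1) = (SwS par P j).filter (· < s) := by
        ext x
        rw [Finset.mem_filter, Finset.mem_filter]
        constructor
        · rintro ⟨hx, hlt⟩
          refine ⟨hx, ?_⟩
          rcases Nat.lt_or_ge x s with h | h
          · exact h
          · exfalso; have : x = s := by omega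
            rw [this] at hx; exact hsw hx
        · rintro ⟨hx, hlt⟩; exact ⟨hx, by omega⟩
      rw [heq]
      exact le_trans (ih hsn) hmono

variable (par P) in
/-- the lines met by path `j`. -/
def linesOf (j : Fin k) : Finset V :=
  (Finset.range (dep par (P j).2 - dep par (P j).1)).image
    (fun s => lineTop par P (au par (P j).2 s))

lemma card_SwS_le_log (hP : ∀ i, IsDescPath par (P i)) (hk : 1 ≤ k) (j : Fin k) :
    (SwS par P j).card ≤ Nat.log 2 k := by
  set nj := dep par (P j).2 - dep par (P j).1 with hnj
  rcases Nat.eq_zero_or_pos nj with h0 | h0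
  · have : SwS par P j = ∅ := by
      rw [SwS, ← hnj, h0]
      simp
    rw [this, Finset.card_empty]
    omega
  · have hfl : (SwS par P j).filter (· < nj - 1) = SwS par P j := by
      apply Finset.filter_true_of_mem
      intro x hx
      rw [SwS, Finset.mem_filter, ← hnj] at hx
      omega
    have h1 := halving hacyc hP (j := j) (nj - 1) (by omega)
    rw [hfl] at h1
    have h2 : nu par P (au par (P j).2 (nj - 1)) ≤ k := nu_le_k par P _
    rw [Nat.le_log_iff_pow_le (by omega) (by omega)]
    omega

lemma card_linesOf_le (hP : ∀ i, IsDescPath par (P i)) (hk : 1 ≤ k) (j : Fin k) :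
    (linesOf par P j).card ≤ Nat.log 2 k + 1 := by
  set b := (P j).2
  set nj := dep par (P j).2 - dep par (P j).1 with hnj
  rcases Nat.eq_zero_or_pos nj with h0 | h0
  · have : linesOf par P j = ∅ := by
      rw [linesOf, ← hnj, h0]
      simp
    rw [this, Finset.card_empty]
    omega
  · have hsub : linesOf par P j ⊆
        insert (lineTop par P (au par b (nj - 1)))
          ((SwS par P j).image (fun s => lineTop par P (au par b s))) := by
      intro t ht
      rw [linesOf, Finset.mem_image] at ht
      obtain ⟨s₀, hs₀, hts⟩ := ht
      rw [Finset.mem_range, ← hnj] at hs₀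
      set F := (Finset.range nj).filter (fun s => lineTop par P (au par b s) = t) with hF
      have hFne : F.Nonempty := ⟨s₀, by
        rw [hF, Finset.mem_filter, Finset.mem_range]
        exact ⟨hs₀, hts⟩⟩
      have hmF := Finset.mem_filter.mp (F.max'_mem hFne)
      have hmr := Finset.mem_range.mp hmF.1
      by_cases hme : F.max' hFne = nj - 1
      · apply Finset.mem_insert.mpr
        left
        rw [← hmF.2, hme]
      · apply Finset.mem_insert.mpr
        right
        rw [Finset.mem_image]
        refine ⟨F.max' hFne, ?_, hmF.2⟩
        rw [SwS, Finset.mem_filter, Finset.mem_range, ← hnj]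
        refine ⟨by omega, by omega, ?_⟩
        rw [hmF.2]
        intro hcon
        have hmem : F.max' hFne + 1 ∈ F :=
          Finset.mem_filter.mpr ⟨Finset.mem_range.mpr (by omega), hcon⟩
        have := F.le_max' _ hmem
        omega
    calc (linesOf par P j).card ≤ _ := Finset.card_le_card hsub
      _ ≤ ((SwS par P j).image (fun s => lineTop par P (au par b s))).card + 1 :=
          Finset.card_insert_le _ _
      _ ≤ (SwS par P j).card + 1 := by
          have := Finset.card_image_le (s := SwS par P j)
            (f := fun s => lineTop par P (au par b s)); omega
      _ ≤ Nat.log 2 k + 1 := by have := card_SwS_le_log hacyc hP hk j; omega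

end SFP

namespace SFP

variable {V : Type*} [Fintype V] {par : V → Option V} {k : ℕ} {P : Fin k → V × V}

variable (par P) in
/-- tops of the heavy lines. -/
def Tops : Finset V :=
  Finset.univ.filter (fun t => par t ≠ none ∧ lineTop par P t = t)

variable (par P) in
/-- all greedy windows, indexed by (line top, window index). -/
def Wset : Finset (V × ℕ) :=
  (Tops par P).biUnion (fun t => (Finset.range (nw par P t)).image (fun r => (t, r)))

lemma mem_Wset {w : V × ℕ} :
    w ∈ Wset par P ↔ (par w.1 ≠ none ∧ lineTop par P w.1 = w.1) ∧ w.2 < nw par P w.1 := by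
  rw [Wset, Finset.mem_biUnion]
  constructor
  · rintro ⟨t, ht, hw⟩
    rw [Finset.mem_image] at hw
    obtain ⟨r, hr, rfl⟩ := hw
    rw [Tops, Finset.mem_filter] at ht
    exact ⟨ht.2, Finset.mem_range.mp hr⟩
  · rintro ⟨ht, hr⟩
    refine ⟨w.1, ?_, ?_⟩
    · rw [Tops, Finset.mem_filter]; exact ⟨Finset.mem_univ _, ht⟩
    · rw [Finset.mem_image]
      exact ⟨w.2, Finset.mem_range.mpr hr, rfl⟩

variable (par P) in
/-- the descending path of a window. -/
def wofW (w : V × ℕ) : V × V := wQ par P w.1 (sg par P w.1 w.2)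

variable (hacyc : ParAcyclic par)
include hacyc

/-- covering: every forest edge lies in some window. -/
lemma edges_subset_windows
    (hcover' : ∀ v, par v ≠ none → ∃ i, v ∈ dpF par (P i)) :
    (Finset.univ.filter (fun v => par v ≠ none)) ⊆
      (Wset par P).biUnion (fun w => dpF par (wofW par P w)) := by
  intro v hv
  rw [Finset.mem_filter] at hv
  have hv' := hv.2
  obtain ⟨hE, hsl⟩ := mem_line (par := par) (P := P) hacyc hv'
  set t := lineTop par P v with htdef
  set s := dep par v - dep par (lineTop par P v) with hsdef
  obtain ⟨r, hrnw, hr1, hr2⟩ := window_cover (par := par) (P := P) hsl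
  rw [Finset.mem_biUnion]
  refine ⟨(t, r), ?_, ?_⟩
  · rw [mem_Wset]
    exact ⟨⟨edge_lineTop hacyc v hv', lineTop_idem hacyc v⟩, hrnw⟩
  · rw [wofW, mem_dpF_wQ hacyc hcover' (edge_lineTop hacyc v hv')
      (sg_lt_llen_of_lt_nw hrnw)]
    exact ⟨s, hr1, hr2, hE.symm⟩

/-- a window meeting a path lies on a line of that path. -/
lemma meet_mem_linesOf (hP : ∀ i, IsDescPath par (P i))
    (hcover' : ∀ v, par v ≠ none → ∃ i, v ∈ dpF par (P i))
    {t : V} (ht : par t ≠ none) {r : ℕ} (hr : r < nw par P t) {j : Fin k}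
    (hm : (dpEdges par (wQ par P t (sg par P t r)) ∩ dpEdges par (P j)).Nonempty) :
    t ∈ linesOf par P j := by
  have hsl := sg_lt_llen_of_lt_nw hr
  obtain ⟨s'', _, _, htr⟩ := (meet_iff hacyc hP hcover' ht hsl).mp hm
  rw [mem_traceS] at htr
  have honl := onLine_of_lt_llen hacyc htr.1
  have hmem := (mem_dpF_iff' hacyc (hP j)).mp htr.2
  have hdb := dep_le_of_anc hacyc hmem.1
  have hda : dep par (P j).1 ≤ dep par (P j).2 := dep_le_of_anc hacyc (hP j)
  set s₀ := dep par (P j).2 - dep par (lE par P t s'') with hs₀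
  have hau : au par (P j).2 s₀ = lE par P t s'' := au_eq_of_anc hacyc hmem.1
  rw [linesOf, Finset.mem_image]
  refine ⟨s₀, Finset.mem_range.mpr (by omega), ?_⟩
  rw [hau, honl.1]

/-- per path: at most `2 (1 + log₂ k)` windows meet it. -/
lemma card_meets_per_path (hP : ∀ i, IsDescPath par (P i))
    (hcover' : ∀ v, par v ≠ none → ∃ i, v ∈ dpF par (P i)) (hk : 1 ≤ k) (j : Fin k) :
    ((Wset par P).filter (fun w =>
        (dpEdges par (wofW par P w) ∩ dpEdges par (P j)).Nonempty)).card ≤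
      2 * (Nat.log 2 k + 1) := by
  have hsub : (Wset par P).filter (fun w =>
        (dpEdges par (wofW par P w) ∩ dpEdges par (P j)).Nonempty) ⊆
      (linesOf par P j).biUnion (fun t =>
        ((Finset.range (nw par P t)).filter (fun r =>
          (dpEdges par (wQ par P t (sg par P t r)) ∩ dpEdges par (P j)).Nonempty)).image
            (fun r => (t, r))) := by
    intro w hw
    rw [Finset.mem_filter] at hw
    obtain ⟨hwW, hwm⟩ := hw
    rw [mem_Wset] at hwW
    rw [Finset.mem_biUnion]
    refine ⟨w.1, meet_mem_linesOf hacyc hP hcover' hwW.1.1 hwW.2 hwm, ?_⟩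
    rw [Finset.mem_image]
    exact ⟨w.2, Finset.mem_filter.mpr ⟨Finset.mem_range.mpr hwW.2, hwm⟩, rfl⟩
  calc ((Wset par P).filter _).card
      ≤ _ := Finset.card_le_card hsub
    _ ≤ ∑ t ∈ linesOf par P j, (((Finset.range (nw par P t)).filter (fun r =>
          (dpEdges par (wQ par P t (sg par P t r)) ∩ dpEdges par (P j)).Nonempty)).image
            (fun r => (t, r))).card := Finset.card_biUnion_le
    _ ≤ ∑ t ∈ linesOf par P j, 2 := by
        apply Finset.sum_le_sum
        intro t htl
        -- t is an edge
        have htE : par t ≠ none := by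
          rw [linesOf, Finset.mem_image] at htl
          obtain ⟨s₀, hs₀, rfl⟩ := htl
          rw [Finset.mem_range] at hs₀
          have := edge_of_mem_dpF (hP j) hacyc (mem_dpF_au hs₀)
          exact edge_lineTop hacyc _ this
        exact le_trans (Finset.card_image_le) (card_meet_le_two hacyc hP hcover' htE j)
    _ = 2 * (linesOf par P j).card := by rw [Finset.sum_const, smul_eq_mul, Nat.mul_comm]
    _ ≤ 2 * (Nat.log 2 k + 1) := by
        have := card_linesOf_le hacyc hP hk j
        omega

end SFP

set_option maxHeartbeats 1000000 in
theorem sparse_path_in_forest' {V : Type*} [Fintype V] (par : V → Option V)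
    (hacyc : ParAcyclic par)
    (k : ℕ) (hk : 1 ≤ k) (P : Fin k → V × V) (hP : ∀ i, IsDescPath par (P i))
    (hcover : ∀ v ∈ forestEdges par, ∃ i, v ∈ dpEdges par (P i))
    (c : ℝ) (hc : 1 ≤ c)
    (hsize : 4 * c * k * (1 + Real.logb 2 k) ≤ ((forestEdges par).ncard : ℝ)) :
    ∃ i, ∃ Q : V × V, IsSubpath par (P i) Q ∧ Q.1 ≠ Q.2 ∧
      (({j | (dpEdges par Q ∩ dpEdges par (P j)).Nonempty}).ncard : ℝ)
        ≤ ((dpEdges par Q).ncard : ℝ) / c := by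
  classical
  open SFP in
  by_contra hcon
  push_neg at hcon
  have hc0 : (0:ℝ) < c := by linarith
  have hcover' : ∀ v, par v ≠ none → ∃ i, v ∈ SFP.dpF par (P i) := by
    intro v hv
    obtain ⟨i, hi⟩ := hcover v hv
    refine ⟨i, ?_⟩
    rw [SFP.coe_dpF' hacyc (hP i)] at hi
    exact hi
  set E := Finset.univ.filter (fun v : V => par v ≠ none) with hE
  have hEcoe : forestEdges par = ↑E := by
    ext v
    rw [hE, Finset.coe_filter]
    simp [forestEdges]
  have hEcard : ((forestEdges par).ncard : ℝ) = (E.card : ℝ) := by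
    rw [hEcoe, Set.ncard_coe_finset]
  have hlb0 : 0 ≤ Real.logb 2 k := Real.logb_nonneg (by norm_num) (by exact_mod_cast hk)
  have hk1 : (1:ℝ) ≤ (k:ℝ) := by exact_mod_cast hk
  have hck : (1:ℝ) ≤ c * k := by nlinarith
  have h1L : (1:ℝ) ≤ 1 + Real.logb 2 k := by linarith
  have hm4 : (4:ℝ) ≤ (E.card : ℝ) := by
    rw [← hEcard]
    nlinarith [hsize]
  have hCE : 4 ≤ E.card := by exact_mod_cast hm4
  have hEne : E.Nonempty := Finset.card_pos.mp (by omega)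
  -- cover
  have hcov2 : E ⊆ (SFP.Wset par P).biUnion (fun w => SFP.dpF par (SFP.wofW par P w)) :=
    SFP.edges_subset_windows hacyc hcover'
  have hWne : (SFP.Wset par P).Nonempty := by
    obtain ⟨v, hv⟩ := hEne
    have := hcov2 hv
    rw [Finset.mem_biUnion] at this
    obtain ⟨w, hw, _⟩ := this
    exact ⟨w, hw⟩
  have hcover_card : E.card ≤ ∑ w ∈ SFP.Wset par P, (SFP.dpF par (SFP.wofW par P w)).card :=
    le_trans (Finset.card_le_card hcov2) Finset.card_biUnion_le
  -- density
  have hwin : ∀ w ∈ SFP.Wset par P,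
      ((SFP.dpF par (SFP.wofW par P w)).card : ℝ) <
      c * (((Finset.univ.filter (fun j =>
        (dpEdges par (SFP.wofW par P w) ∩ dpEdges par (P j)).Nonempty)).card : ℝ)) := by
    intro w hw
    rw [SFP.mem_Wset] at hw
    obtain ⟨⟨ht, _⟩, hr⟩ := hw
    have hsl := SFP.sg_lt_llen_of_lt_nw hr
    obtain ⟨i, hsubp⟩ := SFP.wQ_subpath hacyc hP hcover' ht hsl
    have hne := SFP.wQ_ne hacyc hcover' ht hsl
    have hd := hcon i (SFP.wQ par P w.1 (SFP.sg par P w.1 w.2)) hsubp hne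
    have h1 : (dpEdges par (SFP.wQ par P w.1 (SFP.sg par P w.1 w.2))).ncard =
        (SFP.dpF par (SFP.wofW par P w)).card := by
      rw [SFP.wofW, SFP.coe_dpF' hacyc (SFP.anc_wQ hacyc hcover' ht hsl),
        Set.ncard_coe_finset]
    have h2 : {j | (dpEdges par (SFP.wQ par P w.1 (SFP.sg par P w.1 w.2)) ∩
          dpEdges par (P j)).Nonempty}.ncard =
        ((Finset.univ.filter (fun j =>
          (dpEdges par (SFP.wofW par P w) ∩ dpEdges par (P j)).Nonempty)).card) := by
      have hset : {j | (dpEdges par (SFP.wQ par P w.1 (SFP.sg par P w.1 w.2)) ∩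
          dpEdges par (P j)).Nonempty} =
          ↑(Finset.univ.filter (fun j =>
          (dpEdges par (SFP.wofW par P w) ∩ dpEdges par (P j)).Nonempty)) := by
        ext j
        rw [Finset.coe_filter]
        simp [SFP.wofW]
      rw [hset, Set.ncard_coe_finset]
    rw [h1, h2] at hd
    rw [div_lt_iff₀ hc0] at hd
    linarith
  -- counting: swap the double sum
  have hswap : ∑ w ∈ SFP.Wset par P, ((Finset.univ.filter (fun j =>
        (dpEdges par (SFP.wofW par P w) ∩ dpEdges par (P j)).Nonempty)).card)
      = ∑ j : Fin k, ((SFP.Wset par P).filter (fun w =>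
        (dpEdges par (SFP.wofW par P w) ∩ dpEdges par (P j)).Nonempty)).card := by
    calc ∑ w ∈ SFP.Wset par P, ((Finset.univ.filter (fun j =>
          (dpEdges par (SFP.wofW par P w) ∩ dpEdges par (P j)).Nonempty)).card)
        = ∑ w ∈ SFP.Wset par P, ∑ j : Fin k,
            if (dpEdges par (SFP.wofW par P w) ∩ dpEdges par (P j)).Nonempty then 1 else 0 := by
          apply Finset.sum_congr rfl
          intro w _
          exact Finset.card_filter _ _
      _ = ∑ j : Fin k, ∑ w ∈ SFP.Wset par P,
            if (dpEdges par (SFP.wofW par P w) ∩ dpEdges par (P j)).Nonempty then 1 else 0 :=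
          Finset.sum_comm
      _ = ∑ j : Fin k, ((SFP.Wset par P).filter (fun w =>
            (dpEdges par (SFP.wofW par P w) ∩ dpEdges par (P j)).Nonempty)).card := by
          apply Finset.sum_congr rfl
          intro j _
          exact (Finset.card_filter _ _).symm
  have hperj : ∑ j : Fin k, ((SFP.Wset par P).filter (fun w =>
        (dpEdges par (SFP.wofW par P w) ∩ dpEdges par (P j)).Nonempty)).card
      ≤ k * (2 * (Nat.log 2 k + 1)) := by
    calc ∑ j : Fin k, ((SFP.Wset par P).filter (fun w =>
          (dpEdges par (SFP.wofW par P w) ∩ dpEdges par (P j)).Nonempty)).card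
        ≤ ∑ _j : Fin k, 2 * (Nat.log 2 k + 1) :=
          Finset.sum_le_sum (fun j _ => SFP.card_meets_per_path hacyc hP hcover' hk j)
      _ = k * (2 * (Nat.log 2 k + 1)) := by
          rw [Finset.sum_const, Finset.card_univ, Fintype.card_fin, smul_eq_mul]
  have hcount : ∑ w ∈ SFP.Wset par P, ((Finset.univ.filter (fun j =>
        (dpEdges par (SFP.wofW par P w) ∩ dpEdges par (P j)).Nonempty)).card)
      ≤ k * (2 * (Nat.log 2 k + 1)) := by
    rw [hswap]; exact hperj
  -- real-number chain
  have hR1 : (E.card : ℝ) ≤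
      ∑ w ∈ SFP.Wset par P, ((SFP.dpF par (SFP.wofW par P w)).card : ℝ) := by
    exact_mod_cast hcover_card
  have hR2 : ∑ w ∈ SFP.Wset par P, ((SFP.dpF par (SFP.wofW par P w)).card : ℝ)
      < ∑ w ∈ SFP.Wset par P, c * (((Finset.univ.filter (fun j =>
        (dpEdges par (SFP.wofW par P w) ∩ dpEdges par (P j)).Nonempty)).card : ℝ)) :=
    Finset.sum_lt_sum_of_nonempty hWne hwin
  have hR3 : ∑ w ∈ SFP.Wset par P, c * (((Finset.univ.filter (fun j =>
        (dpEdges par (SFP.wofW par P w) ∩ dpEdges par (P j)).Nonempty)).card : ℝ))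
      = c * ∑ w ∈ SFP.Wset par P, (((Finset.univ.filter (fun j =>
        (dpEdges par (SFP.wofW par P w) ∩ dpEdges par (P j)).Nonempty)).card : ℝ)) := by
    rw [Finset.mul_sum]
  have hR4 : ∑ w ∈ SFP.Wset par P, (((Finset.univ.filter (fun j =>
        (dpEdges par (SFP.wofW par P w) ∩ dpEdges par (P j)).Nonempty)).card : ℝ))
      ≤ ((k * (2 * (Nat.log 2 k + 1)) : ℕ) : ℝ) := by
    exact_mod_cast hcount
  have hlogle : (Nat.log 2 k : ℝ) ≤ Real.logb 2 k := Real.natLog_le_logb k 2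
  have hA : (Nat.log 2 k : ℝ) + 1 ≤ 1 + Real.logb 2 k := by linarith
  have hck0 : (0:ℝ) ≤ 2 * (c * k) := by nlinarith
  have hfinal : ((k * (2 * (Nat.log 2 k + 1)) : ℕ) : ℝ) * c ≤
      4 * c * (k:ℝ) * (1 + Real.logb 2 k) := by
    push_cast
    calc (k:ℝ) * (2 * ((Nat.log 2 k : ℝ) + 1)) * c
        = 2 * (c * (k:ℝ)) * ((Nat.log 2 k : ℝ) + 1) := by ring
      _ ≤ 2 * (c * (k:ℝ)) * (1 + Real.logb 2 k) := mul_le_mul_of_nonneg_left hA hck0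
      _ ≤ 4 * c * (k:ℝ) * (1 + Real.logb 2 k) := by nlinarith [hck, h1L]
  have hlast : c * ((k * (2 * (Nat.log 2 k + 1)) : ℕ) : ℝ) ≤
      4 * c * (k:ℝ) * (1 + Real.logb 2 k) := by
    calc c * ((k * (2 * (Nat.log 2 k + 1)) : ℕ) : ℝ)
        = ((k * (2 * (Nat.log 2 k + 1)) : ℕ) : ℝ) * c := by ring
      _ ≤ _ := hfinal
  have hmul : c * (∑ w ∈ SFP.Wset par P, (((Finset.univ.filter (fun j =>
        (dpEdges par (SFP.wofW par P w) ∩ dpEdges par (P j)).Nonempty)).card : ℝ)))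
      ≤ c * ((k * (2 * (Nat.log 2 k + 1)) : ℕ) : ℝ) :=
    mul_le_mul_of_nonneg_left hR4 hc0.le
  rw [hEcard] at hsize
  linarith


/-- if a rooted forest is edge-covered by `k` descending paths
`P₁,…,P_k` and has at least `4ck(1 + log₂ k)` edges (`c ≥ 1`), then some `Pᵢ`
contains a `c`-sparse subpath `Q`: a subpath with at least one edge meeting at most
`|E(Q)|/c` of the paths on an edge. -/
theorem sparse_path_in_forest {V : Type*} [Fintype V] (par : V → Option V)
    (hacyc : ParAcyclic par)
    (k : ℕ) (hk : 1 ≤ k) (P : Fin k → V × V) (hP : ∀ i, IsDescPath par (P i))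
    (hcover : ∀ v ∈ forestEdges par, ∃ i, v ∈ dpEdges par (P i))
    (c : ℝ) (hc : 1 ≤ c)
    (hsize : 4 * c * k * (1 + Real.logb 2 k) ≤ ((forestEdges par).ncard : ℝ)) :
    ∃ i, ∃ Q : V × V, IsSubpath par (P i) Q ∧ Q.1 ≠ Q.2 ∧
      (({j | (dpEdges par Q ∩ dpEdges par (P j)).Nonempty}).ncard : ℝ)
        ≤ ((dpEdges par Q).ncard : ℝ) / c := sparse_path_in_forest' par hacyc k hk P hP hcover c hc hsize
end SFP
end

section
/- Let k ≥ 2, c ≥ 1, p ≥ 2, and k₁,…,k_p ≥ 1 with Σᵢ kᵢ ≤ k and kᵢ ≤ k/2 for all i. Then 4ck + Σᵢ 4c·kᵢ·(1 + log₂ kᵢ) ≤ 4ck(1 + log₂ k). -/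
/-- for `k ≥ 2`, `c ≥ 1`, `p ≥ 2` and reals `k₁,…,k_p ≥ 1` with
`Σ kᵢ ≤ k` and `kᵢ ≤ k/2`, we have
`4ck + Σ 4c·kᵢ·(1 + log₂ kᵢ) ≤ 4ck(1 + log₂ k)`. -/
theorem inductive_estimate (k c : ℝ) (hk : 2 ≤ k) (hc : 1 ≤ c) (p : ℕ) (hp : 2 ≤ p)
    (ki : Fin p → ℝ) (hki : ∀ i, 1 ≤ ki i) (hsum : ∑ i, ki i ≤ k)
    (hhalf : ∀ i, ki i ≤ k / 2) :
    4 * c * k + ∑ i, 4 * c * ki i * (1 + Real.logb 2 (ki i)) ≤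
      4 * c * k * (1 + Real.logb 2 k) := by
  have hlogk : (1:ℝ) ≤ Real.logb 2 k := by
    rw [show (1:ℝ) = Real.logb 2 2 by simp]
    exact Real.logb_le_logb_of_le (by norm_num) (by norm_num) hk
  have hterm : ∀ i, 4 * c * ki i * (1 + Real.logb 2 (ki i)) ≤
      4 * c * (ki i * Real.logb 2 k) := by
    intro i
    have h1 : Real.logb 2 (ki i) ≤ Real.logb 2 (k / 2) :=
      Real.logb_le_logb_of_le (by norm_num) (by linarith [hki i]) (hhalf i)
    have h2 : Real.logb 2 (k / 2) = Real.logb 2 k - 1 := by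
      rw [Real.logb_div (by linarith) (by norm_num)]; simp
    have hk1 := hki i
    nlinarith [hk1, h1, h2, mul_le_mul_of_nonneg_left (show Real.logb 2 (ki i) ≤ Real.logb 2 k - 1 by linarith) (show (0:ℝ) ≤ ki i by linarith)]
  calc 4 * c * k + ∑ i, 4 * c * ki i * (1 + Real.logb 2 (ki i))
      ≤ 4 * c * k + ∑ i, 4 * c * (ki i * Real.logb 2 k) := by
        have := Finset.sum_le_sum (s := Finset.univ) (fun i _ => hterm i)
        linarith
    _ = 4 * c * k + 4 * c * Real.logb 2 k * ∑ i, ki i := by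
        rw [Finset.mul_sum]
        congr 1
        exact Finset.sum_congr rfl (fun i _ => by ring)
    _ ≤ 4 * c * k + 4 * c * Real.logb 2 k * k := by
        have h0 : 0 ≤ 4 * c * Real.logb 2 k := by nlinarith
        nlinarith [mul_le_mul_of_nonneg_left hsum h0]
    _ = 4 * c * k * (1 + Real.logb 2 k) := by ring
end

section
/- Let H be a cograph with cotree T, and S a set of edited pairs with |S| ≤ k giving graph G. Suppose G is reduced under the three reduction rules (no cograph comodule, no independent-set module of size > k+1, every module containing an edge is a comodule). Let T' be the subtree of T induced by nodes u with |De(u)| ≥ k+2, where De(u) is the set of leaf-descendants of u, and n = |V(G)| ≥ k+2. Then T' has at least n/(k+1) − 2k nodes. -/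
/-- `a` is the least common ancestor of `u` and `v`. -/
def IsLCA {N : Type*} (par : N → Option N) (a u v : N) : Prop :=
  Anc par a u ∧ Anc par a v ∧ ∀ b, Anc par b u → Anc par b v → Anc par b a

/-- `(par, ι, lab)` is a cotree for the cograph `H`: a rooted tree whose leaves are the
vertices of `H` (via `ι`), whose internal nodes are labelled `⊕` (`true`) or `+` (`false`)
with alternating labels and at least two children, and where two vertices are adjacent
iff their least common ancestor is labelled `⊕`. -/
structure IsCotree {V N : Type*} (H : SimpleGraph V) (par : N → Option N)
    (ι : V → N) (lab : N → Bool) : Prop where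
  inj : Function.Injective ι
  acyclic : ParAcyclic par
  rooted : ∃ r, ∀ n, Anc par r n
  leaf_childless : ∀ n v, par n ≠ some (ι v)
  leaves_are_vertices : ∀ n, ({m | par m = some n} = ∅) → ∃ v, n = ι v
  internal_children : ∀ n, (∀ v, n ≠ ι v) → 2 ≤ {m | par m = some n}.ncard
  alternating : ∀ m n, par m = some n → (∃ v, m = ι v) ∨ lab m ≠ lab n
  adj_iff : ∀ x y, x ≠ y → ∀ a, IsLCA par a (ι x) (ι y) → (H.Adj x y ↔ lab a = true)

/-- The leaf-descendants of a node `u`, seen as a set of vertices of the graph. -/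
def De {V N : Type*} (par : N → Option N) (ι : V → N) (u : N) : Set V :=
  {x | Anc par u (ι x)}

namespace Stmt10
open Relation

variable {N : Type*} {par : N → Option N}

lemma anc_of_parent {a b : N} (h : par b = some a) : Anc par a b :=
  Relation.ReflTransGen.single h

lemma anc_eq_or_parent {b n m : N} (h : Anc par b n) (hm : par n = some m) :
    b = n ∨ Anc par b m := by
  rcases Relation.ReflTransGen.cases_tail h with h | ⟨c, hc, hr⟩
  · exact Or.inl h.symm
  · have : c = m := by
      have hcm : par n = some c := hr
      rw [hm] at hcm
      exact (Option.some_inj.mp hcm).symm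
    exact Or.inr (this ▸ hc)

lemma not_anc_of_parent (hac : ParAcyclic par) {u c : N} (hc : par c = some u) :
    ¬ Anc par c u := fun h => hac c (Relation.TransGen.tail' h hc)

lemma anc_antisymm (hac : ParAcyclic par) {a b : N} (h1 : Anc par a b) (h2 : Anc par b a) :
    a = b := by
  rcases Relation.ReflTransGen.cases_tail h1 with h | ⟨c, hc, hr⟩
  · exact h.symm
  · exact absurd (Relation.TransGen.tail' (h2.trans hc) hr) (hac b)

lemma anc_chain {a b n : N} (h1 : Anc par a n) (h2 : Anc par b n) :
    Anc par a b ∨ Anc par b a := by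
  induction h1 using Relation.ReflTransGen.head_induction_on with
  | refl => exact Or.inr h2
  | head step tail ih =>
    rename_i a' c
    rcases ih with h | h
    · exact Or.inl (Relation.ReflTransGen.head step h)
    · rcases anc_eq_or_parent h step with rfl | h'
      · exact Or.inl (Relation.ReflTransGen.single step)
      · exact Or.inr h'

lemma child_eq (hac : ParAcyclic par) {u c c' n : N} (hc : par c = some u)
    (hc' : par c' = some u) (h1 : Anc par c n) (h2 : Anc par c' n) : c = c' := by
  rcases anc_chain h1 h2 with h | h
  · rcases anc_eq_or_parent h hc' with rfl | h'
    · rfl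
    · exact absurd h' (not_anc_of_parent hac hc)
  · rcases anc_eq_or_parent h hc with h' | h'
    · exact h'.symm
    · exact absurd h' (not_anc_of_parent hac hc')

lemma ancestors_finite {r : N} (hr : ∀ n, Anc par r n) (hac : ParAcyclic par) (n : N) :
    {b | Anc par b n}.Finite := by
  have h := hr n
  induction h with
  | refl =>
    refine Set.Finite.subset (Set.finite_singleton r) ?_
    intro b hb
    exact anc_antisymm hac hb (hr b)
  | tail h1 h2 ih =>
    rename_i b c
    refine Set.Finite.subset (ih.insert c) ?_
    intro x hx
    rcases anc_eq_or_parent hx h2 with rfl | hx'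
    · exact Set.mem_insert _ _
    · exact Set.mem_insert_of_mem _ hx'

lemma finset_max (t : Finset N) (hchain : ∀ a ∈ t, ∀ b ∈ t, Anc par a b ∨ Anc par b a)
    (hne : t.Nonempty) : ∃ m ∈ t, ∀ b ∈ t, Anc par b m := by
  classical
  induction t using Finset.induction_on with
  | empty => exact absurd hne (by simp)
  | insert a s ha ih =>
    by_cases hs : s.Nonempty
    · obtain ⟨m, hm, hmax⟩ := ih (fun x hx y hy =>
        hchain x (Finset.mem_insert_of_mem hx) y (Finset.mem_insert_of_mem hy)) hs
      rcases hchain a (Finset.mem_insert_self a s) m (Finset.mem_insert_of_mem hm) with h | h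
      · refine ⟨m, Finset.mem_insert_of_mem hm, ?_⟩
        intro b hb
        rcases Finset.mem_insert.mp hb with rfl | hb'
        · exact h
        · exact hmax b hb'
      · refine ⟨a, Finset.mem_insert_self a s, ?_⟩
        intro b hb
        rcases Finset.mem_insert.mp hb with rfl | hb'
        · exact Relation.ReflTransGen.refl
        · exact (hmax b hb').trans h
    · have : s = ∅ := Finset.not_nonempty_iff_eq_empty.mp hs
      subst this
      exact ⟨a, Finset.mem_insert_self a ∅, by
        intro b hb
        rcases Finset.mem_insert.mp hb with rfl | hb'
        · exact Relation.ReflTransGen.refl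
        · exact absurd hb' (by simp)⟩

lemma exists_max_of_chain {s : Set N} (hs : s.Finite) (hne : s.Nonempty)
    (hchain : ∀ a ∈ s, ∀ b ∈ s, Anc par a b ∨ Anc par b a) :
    ∃ m ∈ s, ∀ b ∈ s, Anc par b m := by
  obtain ⟨m, hm, hmax⟩ := finset_max hs.toFinset
    (by simpa [Set.Finite.mem_toFinset] using hchain)
    (by simpa [Set.Finite.toFinset_nonempty] using hne)
  exact ⟨m, hs.mem_toFinset.mp hm, fun b hb => hmax b (hs.mem_toFinset.mpr hb)⟩



lemma ncard_biUnion_le {α β : Type*} [Finite β] (f : α → Set β) (m : ℕ) {I : Set α}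
    (hI : I.Finite) : (∀ a ∈ I, (f a).ncard ≤ m) → (⋃ a ∈ I, f a).ncard ≤ I.ncard * m := by
  refine Set.Finite.induction_on
    (motive := fun s _ => (∀ a ∈ s, (f a).ncard ≤ m) → (⋃ a ∈ s, f a).ncard ≤ s.ncard * m)
    I hI (by simp) ?_
  intro a s ha hs ih hf
  rw [Set.biUnion_insert]
  calc (f a ∪ ⋃ x ∈ s, f x).ncard ≤ (f a).ncard + (⋃ x ∈ s, f x).ncard :=
        Set.ncard_union_le _ _
    _ ≤ m + s.ncard * m := add_le_add (hf a (Set.mem_insert a s))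
        (ih fun x hx => hf x (Set.mem_insert_of_mem a hx))
    _ = (insert a s).ncard * m := by
        rw [Set.ncard_insert_of_notMem ha hs]; ring

lemma module_H {V N : Type*} {H : SimpleGraph V} {par : N → Option N} {ι : V → N}
    {lab : N → Bool} (hT : IsCotree H par ι lab) (u : N) (C : Set N)
    (hC : ∀ c ∈ C, par c = some u) :
    IsModule H (⋃ c ∈ C, De par ι c) := by
  classical
  intro x hx y hy v hv
  by_cases hxy : x = y
  · subst hxy; rfl
  simp only [Set.mem_iUnion] at hx hy
  obtain ⟨cx, hcx, hxd⟩ := hx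
  obtain ⟨cy, hcy, hyd⟩ := hy
  have hvx : v ≠ x := by rintro rfl; exact hv (Set.mem_biUnion hcx hxd)
  have hvy : v ≠ y := by rintro rfl; exact hv (Set.mem_biUnion hcy hyd)
  obtain ⟨r, hr⟩ := hT.rooted
  have hux : Anc par u (ι x) := (anc_of_parent (hC cx hcx)).trans hxd
  have huy : Anc par u (ι y) := (anc_of_parent (hC cy hcy)).trans hyd
  by_cases hvu : Anc par u (ι v)
  · -- v is below u
    rcases Relation.ReflTransGen.cases_head hvu with heq | ⟨cv, hcv, hvd⟩
    · exfalso
      have : par cx = some (ι v) := by rw [← heq]; exact hC cx hcx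
      exact hT.leaf_childless cx v this
    · have hcvC : cv ∉ C := fun h => hv (Set.mem_biUnion h hvd)
      have key : ∀ (z : V) (cz : N), cz ∈ C → Anc par cz (ι z) →
          IsLCA par u (ι v) (ι z) := by
        intro z cz hczC hzd
        have hcz : par cz = some u := hC cz hczC
        refine ⟨hvu, (anc_of_parent hcz).trans hzd, ?_⟩
        intro b hbv hbz
        rcases anc_chain hbz ((anc_of_parent hcz).trans hzd) with h | h
        · exact h
        · rcases Relation.ReflTransGen.cases_head h with rfl | ⟨cb, hcb, hbd⟩
          · exact Relation.ReflTransGen.refl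
          · exfalso
            have h1 : cb = cz := child_eq hT.acyclic hcb hcz (hbd.trans hbz) hzd
            have h2 : cb = cv := child_eq hT.acyclic hcb hcv (hbd.trans hbv) hvd
            rw [h1] at h2
            exact hcvC (h2 ▸ hczC)
      rw [hT.adj_iff v x hvx u (key x cx hcx hxd),
        hT.adj_iff v y hvy u (key y cy hcy hyd)]
  · -- v is not below u
    have hfin : {b | Anc par b (ι v) ∧ Anc par b u}.Finite :=
      (ancestors_finite hr hT.acyclic (ι v)).subset fun b hb => hb.1
    have hne : {b | Anc par b (ι v) ∧ Anc par b u}.Nonempty := ⟨r, hr _, hr _⟩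
    have hch : ∀ a ∈ {b | Anc par b (ι v) ∧ Anc par b u},
        ∀ b ∈ {b | Anc par b (ι v) ∧ Anc par b u}, Anc par a b ∨ Anc par b a :=
      fun a ha b hb => anc_chain ha.1 hb.1
    obtain ⟨a, ⟨hav, hau⟩, hmax⟩ := exists_max_of_chain hfin hne hch
    have key : ∀ (z : V), Anc par u (ι z) → IsLCA par a (ι v) (ι z) := by
      intro z hz
      refine ⟨hav, hau.trans hz, ?_⟩
      intro b hbv hbz
      rcases anc_chain hbz hz with h | h
      · exact hmax b ⟨hbv, h⟩
      · exact absurd (h.trans hbv) hvu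
    rw [hT.adj_iff v x hvx a (key x hux), hT.adj_iff v y hvy a (key y huy)]

end Stmt10

open Stmt10
/-- let `H` be a cograph with cotree `(par, ι, lab)`, and `G` the edit
of `H` by a set `S` of at most `k` pairs. If `G` is reduced under the three reduction
rules (no comodule induces a cograph, independent-set modules have size at most `k+1`,
modules containing an edge are comodules) and `n = |V| ≥ k + 2`, then the subtree `T'`
of the cotree induced by the nodes with at least `k+2` leaf-descendants has at least
`n/(k+1) − 2k` nodes. -/
theorem size_of_Tprime {V N : Type*} [Fintype V] (H : SimpleGraph V)
    (par : N → Option N) (ι : V → N) (lab : N → Bool)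
    (hT : IsCotree H par ι lab) (hH : IsCograph H)
    (S : Set (Sym2 V)) (k : ℕ) (hS : S.ncard ≤ k)
    (G : SimpleGraph V) (hG : G = editGraph H S)
    (h1 : ∀ M : Set V, IsComodule G M →
      ∃ a b c d, a ∈ M ∧ b ∈ M ∧ c ∈ M ∧ d ∈ M ∧ IsInducedP4 G a b c d)
    (h2 : ∀ M : Set V, IsModule G M → (∀ x ∈ M, ∀ y ∈ M, ¬ G.Adj x y) →
      M.ncard ≤ k + 1)
    (h3 : ∀ M : Set V, IsModule G M → (∃ x ∈ M, ∃ y ∈ M, G.Adj x y) →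
      IsComodule G M)
    (hn : k + 2 ≤ Fintype.card V) :
    (Fintype.card V : ℝ) / (k + 1) - 2 * k ≤
      (({u : N | k + 2 ≤ (De par ι u).ncard}).ncard : ℝ) := by
  classical
  obtain ⟨r, hr⟩ := hT.rooted
  set Tset : Set N := {u : N | k + 2 ≤ (De par ι u).ncard} with hTset
  have Demono : ∀ a b : N, Anc par a b → De par ι b ⊆ De par ι a :=
    fun a b hab x hx => hab.trans hx
  have Tup : ∀ a b : N, Anc par a b → b ∈ Tset → a ∈ Tset := by
    intro a b hab hb
    rw [hTset] at hb ⊢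
    exact le_trans hb (Set.ncard_le_ncard (Demono a b hab) (Set.toFinite _))
  have rootT : r ∈ Tset := by
    have huniv : De par ι r = Set.univ := Set.eq_univ_of_forall (fun x => hr (ι x))
    rw [hTset]
    simp only [Set.mem_setOf_eq, huniv, Set.ncard_univ, Nat.card_eq_fintype_card]
    exact hn
  have leafT : ∀ x : V, ι x ∉ Tset := by
    intro x
    have hDe : De par ι (ι x) = {x} := by
      apply Set.eq_singleton_iff_unique_mem.mpr
      constructor
      · exact Relation.ReflTransGen.refl
      · intro y hy
        rcases Relation.ReflTransGen.cases_head hy with heq | ⟨c, hc, _⟩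
        · exact (hT.inj heq).symm
        · exact absurd hc (hT.leaf_childless c x)
    rw [hTset]
    simp only [Set.mem_setOf_eq, hDe, Set.ncard_singleton]
    omega
  have exists_border : ∀ n : N, n ∉ Tset →
      ∃ c, Anc par c n ∧ c ∉ Tset ∧ ∃ u, par c = some u ∧ u ∈ Tset := by
    intro n
    have h := hr n
    induction h with
    | refl => intro h; exact absurd rootT h
    | tail h1 h2 ih =>
      rename_i b c
      intro hc
      by_cases hb : b ∈ Tset
      · exact ⟨c, Relation.ReflTransGen.refl, hc, b, h2, hb⟩
      · obtain ⟨c', hA, hB, hC'⟩ := ih hb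
        exact ⟨c', hA.tail h2, hB, hC'⟩
  have border : ∀ x : V, ∃ c, Anc par c (ι x) ∧ c ∉ Tset ∧
      ∃ u, par c = some u ∧ u ∈ Tset :=
    fun x => exists_border (ι x) (leafT x)
  choose cf hcf1 hcf2 pf hpf1 hpf2 using border
  have border_unique : ∀ (c c' : N) (nn : N), Anc par c nn → Anc par c' nn →
      c ∉ Tset → c' ∉ Tset → (∃ u, par c = some u ∧ u ∈ Tset) →
      (∃ u, par c' = some u ∧ u ∈ Tset) → c = c' := by
    intro c c' nn h1' h2' hc hc' hex hex'
    obtain ⟨u1, hu1, hu1T⟩ := hex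
    obtain ⟨u2, hu2, hu2T⟩ := hex'
    rcases anc_chain h1' h2' with h | h
    · rcases anc_eq_or_parent h hu2 with rfl | h'
      · rfl
      · exact absurd (Tup c u2 h' hu2T) hc
    · rcases anc_eq_or_parent h hu1 with heq | h'
      · exact heq.symm
      · exact absurd (Tup c' u1 h' hu1T) hc'
  set R : Set V := ⋃ e ∈ S, {x | x ∈ e} with hRdef
  have unedited : ∀ x : V, x ∉ R → ∀ v : V, G.Adj v x ↔ H.Adj v x := by
    intro x hx v
    subst hG
    change (v ≠ x ∧ ((H.Adj v x ∧ s(v,x) ∉ S) ∨ (¬ H.Adj v x ∧ s(v,x) ∈ S))) ↔ H.Adj v x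
    constructor
    · rintro ⟨hne, h | h⟩
      · exact h.1
      · exact absurd (Set.mem_biUnion h.2 (by simp)) hx
    · intro h
      refine ⟨(H.ne_of_adj h), Or.inl ⟨h, fun hs => hx (Set.mem_biUnion hs (by simp))⟩⟩
  set Xset : N → Set V :=
    fun u => ⋃ c ∈ {c : N | par c = some u ∧ De par ι c ∩ R = ∅}, De par ι c with hXset
  have XmodH : ∀ u, IsModule H (Xset u) :=
    fun u => module_H hT u _ (fun c hc => hc.1)
  have Xuned : ∀ u x, x ∈ Xset u → x ∉ R := by
    intro u x hx hxR
    rw [hXset] at hx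
    simp only [Set.mem_iUnion] at hx
    obtain ⟨c, hc, hxc⟩ := hx
    have : x ∈ De par ι c ∩ R := ⟨hxc, hxR⟩
    rw [hc.2] at this
    exact absurd this (Set.notMem_empty x)
  have XmodG : ∀ u, IsModule G (Xset u) := by
    intro u x hx y hy v hv
    rw [unedited x (Xuned u x hx) v, unedited y (Xuned u y hy) v]
    exact XmodH u x hx y hy v hv
  have Xcard : ∀ u, (Xset u).ncard ≤ k + 1 := by
    intro u
    refine h2 _ (XmodG u) ?_
    intro x hx y hy hadj
    obtain ⟨a, b, c, d, ha, hb, hcm, hd, hp4⟩ := h1 _ (h3 _ (XmodG u) ⟨x, hx, y, hy, hadj⟩)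
    refine hH a b c d ?_
    obtain ⟨n1, n2, n3, n4, n5, n6, e1, e2, e3, f1, f2, f3⟩ := hp4
    have tr : ∀ p q : V, q ∈ Xset u → (G.Adj p q ↔ H.Adj p q) :=
      fun p q hq => unedited q (Xuned u q hq) p
    exact ⟨n1, n2, n3, n4, n5, n6, (tr a b hb).mp e1, (tr b c hcm).mp e2, (tr c d hd).mp e3,
      fun h => f1 ((tr a c hcm).mpr h), fun h => f2 ((tr a d hd).mpr h),
      fun h => f3 ((tr b d hd).mpr h)⟩
  have cover : (Set.univ : Set V) ⊆
      (⋃ u ∈ Tset, Xset u) ∪ (⋃ r' ∈ R, De par ι (cf r')) := by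
    intro x _
    by_cases hcl : De par ι (cf x) ∩ R = ∅
    · left
      refine Set.mem_biUnion (hpf2 x) ?_
      exact Set.mem_biUnion (show cf x ∈ {c : N | par c = some (pf x) ∧ De par ι c ∩ R = ∅}
        from ⟨hpf1 x, hcl⟩) (hcf1 x)
    · right
      obtain ⟨r', hm⟩ := Set.nonempty_iff_ne_empty.mpr hcl
      have heq : cf x = cf r' := border_unique (cf x) (cf r') (ι r') hm.1 (hcf1 r')
        (hcf2 x) (hcf2 r') ⟨pf x, hpf1 x, hpf2 x⟩ ⟨pf r', hpf1 r', hpf2 r'⟩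
      exact Set.mem_biUnion hm.2 (heq ▸ hcf1 x)
  have Tfin : Tset.Finite := by
    have hsub : Tset ⊆ ⋃ x : V, {b | Anc par b (ι x)} := by
      intro u hu
      rw [hTset] at hu
      have hne : (De par ι u).Nonempty := by
        apply Set.nonempty_of_ncard_ne_zero
        have hu' : k + 2 ≤ (De par ι u).ncard := hu
        omega
      obtain ⟨x, hx⟩ := hne
      exact Set.mem_iUnion.mpr ⟨x, hx⟩
    exact (Set.finite_iUnion (fun x => ancestors_finite hr hT.acyclic (ι x))).subset hsub
  have hsmall : ∀ c : N, c ∉ Tset → (De par ι c).ncard ≤ k + 1 := by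
    intro c hc
    by_contra h
    exact hc (by rw [hTset]; exact show k + 2 ≤ (De par ι c).ncard by omega)
  have hA : (⋃ u ∈ Tset, Xset u).ncard ≤ Tset.ncard * (k + 1) :=
    ncard_biUnion_le _ _ Tfin (fun u _ => Xcard u)
  have Rfin : R.Finite := Set.toFinite R
  have Sfin : S.Finite := Set.toFinite S
  have hRcard : R.ncard ≤ 2 * k := by
    have hle : R.ncard ≤ S.ncard * 2 := by
      rw [hRdef]
      refine ncard_biUnion_le _ _ Sfin ?_
      intro e _
      induction e using Sym2.ind with
      | _ a b =>
        have hset : {x : V | x ∈ s(a, b)} = {a, b} := by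
          ext z; simp [Sym2.mem_iff]
        rw [hset]
        exact (Set.ncard_insert_le a {b}).trans (by simp)
    omega
  have hB : (⋃ r' ∈ R, De par ι (cf r')).ncard ≤ 2 * k * (k + 1) := by
    have := ncard_biUnion_le (fun r' => De par ι (cf r')) (k + 1) Rfin
      (fun r' _ => hsmall _ (hcf2 r'))
    exact this.trans (Nat.mul_le_mul_right _ hRcard)
  have main : Fintype.card V ≤ Tset.ncard * (k + 1) + 2 * k * (k + 1) := by
    calc Fintype.card V = (Set.univ : Set V).ncard := by
          rw [Set.ncard_univ, Nat.card_eq_fintype_card]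
      _ ≤ ((⋃ u ∈ Tset, Xset u) ∪ (⋃ r' ∈ R, De par ι (cf r'))).ncard :=
          Set.ncard_le_ncard cover (Set.toFinite _)
      _ ≤ (⋃ u ∈ Tset, Xset u).ncard + (⋃ r' ∈ R, De par ι (cf r')).ncard :=
          Set.ncard_union_le _ _
      _ ≤ Tset.ncard * (k + 1) + 2 * k * (k + 1) := add_le_add hA hB
  have hk : (0 : ℝ) < (k : ℝ) + 1 := by positivity
  rw [sub_le_iff_le_add, div_le_iff₀ hk]
  have main' : (Fintype.card V : ℝ) ≤
      (Tset.ncard : ℝ) * ((k : ℝ) + 1) + 2 * (k : ℝ) * ((k : ℝ) + 1) := by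
    exact_mod_cast main
  nlinarith [main']
end

section
/- Let G be a graph with connected component C = G₁ ⊕ G₂ (a complete join of two nonempty graphs), and suppose C is not all of G. If C contains an induced P4, then (without loss of generality with the P4 contained in G₁) the vertex set of G₁ is a module of G that is not a comodule and that contains an edge. -/
/-- if a connected component `C ≠ V` of `G` is a complete join
`G₁ ⊕ G₂` of two nonempty parts and contains an induced `P₄` (wlog inside `G₁`),
then the vertex set of `G₁` is a module of `G` which is not a comodule and which
contains an edge. -/
theorem join_component_gives_module {V : Type*} (G : SimpleGraph V)
    (C V1 V2 : Set V) (hC : IsCC G C) (hCne : C ≠ Set.univ)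
    (hpart : V1 ∪ V2 = C) (hdisj : Disjoint V1 V2)
    (h1 : V1.Nonempty) (h2 : V2.Nonempty)
    (hjoin : ∀ x ∈ V1, ∀ y ∈ V2, G.Adj x y)
    (a b c d : V) (ha : a ∈ V1) (hb : b ∈ V1) (hc : c ∈ V1) (hd : d ∈ V1)
    (hP4 : IsInducedP4 G a b c d) :
    IsModule G V1 ∧ ¬ IsComodule G V1 ∧ ∃ x ∈ V1, ∃ y ∈ V1, G.Adj x y := by
  obtain ⟨x0, hx0⟩ := hC
  have hmemC : ∀ u, u ∈ C ↔ G.Reachable x0 u := by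
    intro u; rw [hx0]; exact Iff.rfl
  have hsub1 : V1 ⊆ C := hpart ▸ Set.subset_union_left
  have hout : ∀ v, v ∉ C → ∀ u ∈ C, ¬ G.Adj v u := by
    intro v hv u hu hadj
    exact hv ((hmemC v).2 (((hmemC u).1 hu).trans hadj.symm.reachable))
  have hmod : IsModule G V1 := by
    intro x hx y hy v hv
    by_cases hvC : v ∈ C
    · have hv2 : v ∈ V2 := by
        rcases (hpart ▸ hvC : v ∈ V1 ∪ V2) with h | h
        · exact absurd h hv
        · exact h
      exact ⟨fun _ => (hjoin y hy v hv2).symm, fun _ => (hjoin x hx v hv2).symm⟩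
    · exact ⟨fun h => absurd h (hout v hvC x (hsub1 hx)),
        fun h => absurd h (hout v hvC y (hsub1 hy))⟩
  refine ⟨hmod, ?_, a, ha, b, hb, hP4.2.2.2.2.2.2.1⟩
  rintro ⟨-, ⟨z, hz⟩ | ⟨z, hz⟩⟩
  · obtain ⟨y2, hy2⟩ := h2
    have hra : G.Reachable z a := by have := hz ▸ ha; exact this
    have : y2 ∈ V1 := by
      rw [hz]
      exact hra.trans (hjoin a ha y2 hy2).reachable
    exact Set.disjoint_left.1 hdisj this hy2
  · obtain ⟨w, hw⟩ : ∃ w, w ∉ C := by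
      by_contra h
      push_neg at h
      exact hCne (Set.eq_univ_of_forall h)
    have hra : Gᶜ.Reachable z a := by have := hz ▸ ha; exact this
    have hadj : Gᶜ.Adj a w := by
      refine ⟨fun h => hw (h ▸ hsub1 ha), fun h => hout w hw a (hsub1 ha) h.symm⟩
    have : w ∈ V1 := by
      rw [hz]
      exact hra.trans hadj.reachable
    exact hw (hsub1 this)
end

section
/- Let H be a cograph with cotree T, and let u be an internal node of T labelled ⊕ with free sets F and F' attached as follows: F' is a set of leaves that are children of a +-labelled child u' of u, and F is a set of leaves that are children of another child u'' of u (u'' ≠ u'). Pick x ∈ F and x' ∈ F'. Then for any vertex y of H distinct from x and x', {x, x'} is a module of the induced subgraph H[{x, x', y}] if and only if y is not a descendant leaf of u. -/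
namespace CutDetectionAux

variable {N : Type*} (par : N → Option N)

/-- Iterated parent map. -/
def parIter : ℕ → N → Option N
  | 0, n => some n
  | k+1, n => (par n).bind (parIter k)

variable {par}

lemma anc_iff_parIter {a b : N} : Anc par a b ↔ ∃ k, parIter par k b = some a := by
  constructor
  · intro h
    induction h with
    | refl => exact ⟨0, rfl⟩
    | tail hab hbc ih =>
      rcases ih with ⟨k, hk⟩
      -- hbc : parentRel par b c, i.e. par c = some b
      unfold parentRel at hbc
      exact ⟨k+1, by simp [parIter, hbc, hk]⟩
  · rintro ⟨k, hk⟩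
    induction k generalizing b with
    | zero => simp [parIter] at hk; subst hk; exact Relation.ReflTransGen.refl
    | succ k ih =>
      simp only [parIter, Option.bind_eq_some_iff] at hk
      rcases hk with ⟨c, hc, hck⟩
      exact (ih hck).tail hc

lemma parIter_add (m j : ℕ) (b : N) :
    parIter par (m + j) b = (parIter par m b).bind (parIter par j) := by
  induction m generalizing b with
  | zero => simp [parIter]
  | succ m ih =>
    have : m + 1 + j = (m + j) + 1 := by omega
    rw [this]
    show (par b).bind (parIter par (m + j)) = _
    cases hb : par b with
    | none => simp [parIter, hb]
    | some c => simp [parIter, hb, ih c]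

lemma chain_anc {m n : ℕ} {b p q : N} (hm : parIter par m b = some p)
    (hn : parIter par n b = some q) (hmn : m ≤ n) : Anc par q p := by
  have h : parIter par (m + (n - m)) b = some q := by rwa [Nat.add_sub_cancel' hmn]
  rw [parIter_add, hm] at h
  exact anc_iff_parIter.2 ⟨n - m, h⟩

lemma anc_total {a b c : N} (ha : Anc par a c) (hb : Anc par b c) :
    Anc par a b ∨ Anc par b a := by
  rcases anc_iff_parIter.1 ha with ⟨m, hm⟩
  rcases anc_iff_parIter.1 hb with ⟨n, hn⟩
  rcases le_total m n with h | h
  · exact Or.inr (chain_anc hm hn h)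
  · exact Or.inl (chain_anc hn hm h)

lemma anc_step {b c d : N} (hc : par c = some d) : Anc par b c ↔ b = c ∨ Anc par b d := by
  constructor
  · intro h
    rcases Relation.ReflTransGen.cases_tail h with h | ⟨e, he, hrel⟩
    · exact Or.inl h.symm
    · unfold parentRel at hrel
      rw [hc] at hrel
      rw [← Option.some_inj.1 hrel] at he
      exact Or.inr he
  · rintro (rfl | h)
    · exact Relation.ReflTransGen.refl
    · exact h.tail hc

lemma anc_antisym_leaf {V : Type*} {ι : V → N} (hlc : ∀ n v, par n ≠ some (ι v))
    {v : V} {n : N} (h : Anc par (ι v) n) : ι v = n := by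
  rcases Relation.ReflTransGen.cases_head h with h | ⟨c, hc, _⟩
  · exact h
  · exact absurd hc (hlc c v)

lemma no_anc_of_parent (hac : ParAcyclic par) {c d : N} (hc : par c = some d) :
    ¬ Anc par c d := fun h => hac c (Relation.TransGen.tail' h hc)

end CutDetectionAux

open CutDetectionAux in
/-- in a cotree, let `u` be a `⊕`-node with a `+`-child `u'` and another
child `u''`, `F'` a set of leaf-children of `u'`, `F` a set of leaf-children of `u''`
with `De(u) ⊆ De(u') ∪ F`. For `x ∈ F`, `x' ∈ F'` and any vertex `y ∉ {x, x'}`, the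
pair `{x, x'}` is a module of `H[{x, x', y}]` iff `y` is not a leaf-descendant of `u`. -/
theorem cut_detection {V N : Type*} (H : SimpleGraph V) (par : N → Option N)
    (ι : V → N) (lab : N → Bool) (hT : IsCotree H par ι lab) (hH : IsCograph H)
    (u u' u'' : N) (hlabu : lab u = true) (hlabu' : lab u' = false)
    (hu' : par u' = some u) (hu'' : par u'' = some u) (hne : u'' ≠ u')
    (F F' : Set V)
    (hF' : ∀ v ∈ F', par (ι v) = some u')
    (hF : ∀ v ∈ F, par (ι v) = some u'')
    (hDe : ∀ v : V, v ∈ De par ι u → v ∈ De par ι u' ∨ v ∈ F)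
    (x : V) (hx : x ∈ F) (x' : V) (hx' : x' ∈ F')
    (y : V) (hyx : y ≠ x) (hyx' : y ≠ x') :
    ((H.Adj y x ↔ H.Adj y x') ↔ y ∉ De par ι u) := by
  have hxp : par (ι x) = some u'' := hF x hx
  have hx'p : par (ι x') = some u' := hF' x' hx'
  have ancuu' : Anc par u u' := Relation.ReflTransGen.single hu'
  have ancuu'' : Anc par u u'' := Relation.ReflTransGen.single hu''
  have leafanc := fun {v : V} {n : N} h => anc_antisym_leaf (ι := ι) hT.leaf_childless (v := v) (n := n) h
  constructor
  · intro hiff hyDe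
    have hyDe' : Anc par u (ι y) := hyDe
    rcases hDe y hyDe with hy' | hyF
    · -- y is a descendant of u'
      have hy'a : Anc par u' (ι y) := hy'
      have lca1 : IsLCA par u (ι y) (ι x) := by
        refine ⟨hyDe', ancuu''.tail hxp, ?_⟩
        intro b hby hbx
        rcases (anc_step hxp).1 hbx with rfl | hbu''
        · exact absurd (hT.inj (leafanc hby)).symm hyx
        rcases (anc_step hu'').1 hbu'' with rfl | hbu
        · rcases anc_total hby hy'a with h | h
          · rcases (anc_step hu').1 h with h1 | h1
            · exact absurd h1 hne
            · exact absurd h1 (no_anc_of_parent hT.acyclic hu'')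
          · rcases (anc_step hu'').1 h with h1 | h1
            · exact absurd h1.symm hne
            · exact absurd h1 (no_anc_of_parent hT.acyclic hu')
        · exact hbu
      have lca2 : IsLCA par u' (ι y) (ι x') := by
        refine ⟨hy'a, Relation.ReflTransGen.single hx'p, ?_⟩
        intro b hby hbx'
        rcases (anc_step hx'p).1 hbx' with rfl | hbu'
        · exact absurd (hT.inj (leafanc hby)).symm hyx'
        · exact hbu'
      have h1 : H.Adj y x := (hT.adj_iff y x hyx u lca1).2 hlabu
      have h2 := (hT.adj_iff y x' hyx' u' lca2).1 (hiff.1 h1)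
      rw [hlabu'] at h2
      exact Bool.false_ne_true h2
    · -- y ∈ F
      have hyp : par (ι y) = some u'' := hF y hyF
      have lca1 : IsLCA par u'' (ι y) (ι x) := by
        refine ⟨Relation.ReflTransGen.single hyp, Relation.ReflTransGen.single hxp, ?_⟩
        intro b hby hbx
        rcases (anc_step hyp).1 hby with rfl | h
        · exact absurd (hT.inj (leafanc hbx)) hyx
        · exact h
      have hlabu'' : lab u'' = false := by
        rcases hT.alternating u'' u hu'' with ⟨v, hv⟩ | h
        · exact absurd (hv ▸ hxp) (hT.leaf_childless (ι x) v)
        · rw [hlabu] at h; simpa using h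
      have lca2 : IsLCA par u (ι y) (ι x') := by
        refine ⟨ancuu''.tail hyp, ancuu'.tail hx'p, ?_⟩
        intro b hby hbx'
        rcases (anc_step hx'p).1 hbx' with rfl | hbu'
        · exact absurd (hT.inj (leafanc hby)).symm hyx'
        rcases (anc_step hu').1 hbu' with rfl | hbu
        · rcases (anc_step hyp).1 hby with h1 | h1
          · exact absurd (h1 ▸ hx'p) (hT.leaf_childless (ι x') y)
          · rcases (anc_step hu'').1 h1 with h2 | h2
            · exact absurd h2.symm hne
            · exact absurd h2 (no_anc_of_parent hT.acyclic hu')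
        · exact hbu
      have h2 : H.Adj y x' := (hT.adj_iff y x' hyx' u lca2).2 hlabu
      have h1 := (hT.adj_iff y x hyx u'' lca1).1 (hiff.2 h2)
      rw [hlabu''] at h1
      exact Bool.false_ne_true h1
  · intro hyDe
    have hyDe' : ¬ Anc par u (ι y) := hyDe
    have keyx : ∀ b, Anc par b (ι y) → Anc par b (ι x) → Anc par b u := by
      intro b hby hbx
      rcases (anc_step hxp).1 hbx with rfl | h
      · exact absurd (hT.inj (leafanc hby)).symm hyx
      rcases (anc_step hu'').1 h with rfl | h
      · exact absurd (ancuu''.trans hby) hyDe'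
      · exact h
    have keyx' : ∀ b, Anc par b (ι y) → Anc par b (ι x') → Anc par b u := by
      intro b hby hbx'
      rcases (anc_step hx'p).1 hbx' with rfl | h
      · exact absurd (hT.inj (leafanc hby)).symm hyx'
      rcases (anc_step hu').1 h with rfl | h
      · exact absurd (ancuu'.trans hby) hyDe'
      · exact h
    obtain ⟨r, hr⟩ := hT.rooted
    obtain ⟨k0, hk0⟩ := anc_iff_parIter.1 (hr (ι y))
    classical
    have hP : ∃ k, ∃ a, parIter par k (ι y) = some a ∧ Anc par a u := ⟨k0, r, hk0, hr u⟩
    obtain ⟨a, han, hau⟩ := Nat.find_spec hP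
    have hay : Anc par a (ι y) := anc_iff_parIter.2 ⟨Nat.find hP, han⟩
    have hmin : ∀ b, Anc par b (ι y) → Anc par b u → Anc par b a := by
      intro b hby hbu
      obtain ⟨m, hm⟩ := anc_iff_parIter.1 hby
      exact chain_anc han hm (Nat.find_min' hP ⟨b, hm, hbu⟩)
    have lca1 : IsLCA par a (ι y) (ι x) :=
      ⟨hay, hau.trans (ancuu''.tail hxp), fun b hby hbx => hmin b hby (keyx b hby hbx)⟩
    have lca2 : IsLCA par a (ι y) (ι x') :=
      ⟨hay, hau.trans (ancuu'.tail hx'p), fun b hby hbx' => hmin b hby (keyx' b hby hbx')⟩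
    rw [hT.adj_iff y x hyx a lca1, hT.adj_iff y x' hyx' a lca2]
end
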